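/- arXiv:1904.05338 — 10 statements merged into one kernel-verified Lean document; each statement's English description precedes it below -/
import Mathlib

section
/- Let S ⊆ ℝ^p be a closed scale-invariant set whose linear span is ℝ^p. Then for every θ ∈ ℝ^p and every ω ∈ Π(θ;S) one has the alignment identity ⟨θ, ω⟩ = ‖ω‖₂², and moreover (‖θ‖_S⋆)² = ‖θ‖₂² − dist(θ,S)². -/
open Metric Set

noncomputable section

/-- Euclidean space `ℝ^p`. -/
abbrev E (p : ℕ) := EuclideanSpace ℝ (Fin p)

/-- The (possibly set-valued) orthogonal projection onto a set `A`. -/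
def projSet {p : ℕ} (A : Set (E p)) (θ : E p) : Set (E p) :=
  {ω | ω ∈ A ∧ ‖θ - ω‖ = Metric.infDist θ A}

/-- A set is scale-invariant if it is closed under scaling by any real number. -/
def ScaleInvariant {p : ℕ} (S : Set (E p)) : Prop :=
  ∀ (a : ℝ), ∀ β ∈ S, a • β ∈ S

/-- The unit ball of the structure norm: convex hull of the unit-norm elements of `S`. -/
def structBall {p : ℕ} (S : Set (E p)) : Set (E p) :=
  convexHull ℝ {β ∈ S | ‖β‖ = 1}

/-- The dual norm `‖θ‖_S⋆ = sup {⟨β, θ⟩ : β ∈ B_S}`. -/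
def dualNorm {p : ℕ} (S : Set (E p)) (θ : E p) : ℝ :=
  sSup ((fun β => (inner ℝ β θ : ℝ)) '' structBall S)

/-- Alignment lemma. -/
lemma alignment_aux {p : ℕ} {S : Set (E p)} (hscale : ScaleInvariant S)
    (θ ω : E p) (hω : ω ∈ S) (hdist : ‖θ - ω‖ = Metric.infDist θ S) :
    (inner ℝ θ ω : ℝ) = ‖ω‖ ^ 2 := by
  by_cases h0 : ω = 0
  · simp [h0]
  · have hn : (0:ℝ) < ‖ω‖ ^ 2 := by
      have hp : 0 < ‖ω‖ := norm_pos_iff.2 h0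
      positivity
    set c : ℝ := inner ℝ θ ω with hc
    set t : ℝ := c / ‖ω‖ ^ 2 with ht
    have hmem : t • ω ∈ S := hscale t ω hω
    have h1 : ‖θ - ω‖ ≤ ‖θ - t • ω‖ := by
      rw [hdist]
      simpa [dist_eq_norm] using Metric.infDist_le_dist_of_mem hmem
    have h2 : ‖θ - ω‖ ^ 2 ≤ ‖θ - t • ω‖ ^ 2 := by
      have := norm_nonneg (θ - ω)
      nlinarith [norm_nonneg (θ - t • ω)]
    have e1 : ‖θ - ω‖ ^ 2 = ‖θ‖ ^ 2 - 2 * c + ‖ω‖ ^ 2 := by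
      rw [norm_sub_sq_real]
    have e2 : ‖θ - t • ω‖ ^ 2 = ‖θ‖ ^ 2 - 2 * (t * c) + t ^ 2 * ‖ω‖ ^ 2 := by
      rw [norm_sub_sq_real, real_inner_smul_right, norm_smul, mul_pow, Real.norm_eq_abs,
        sq_abs, ← hc]
    rw [e1, e2] at h2
    have htc : t * ‖ω‖ ^ 2 = c := by rw [ht, div_mul_cancel₀ c hn.ne']
    nlinarith [sq_nonneg (c - ‖ω‖ ^ 2)]

/-- the alignment identity `⟨θ, ω⟩ = ‖ω‖₂²` for any projection `ω` of `θ`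
onto `S`, and the identity `(‖θ‖_S⋆)² = ‖θ‖₂² − dist(θ, S)²`. -/
theorem alignment_and_dualNorm_sq (p : ℕ) (S : Set (E p)) (hclosed : IsClosed S)
    (hscale : ScaleInvariant S) (hspan : Submodule.span ℝ S = ⊤) :
    ∀ θ : E p, (∀ ω ∈ projSet S θ, (inner ℝ θ ω : ℝ) = ‖ω‖ ^ 2) ∧
      (dualNorm S θ) ^ 2 = ‖θ‖ ^ 2 - (Metric.infDist θ S) ^ 2 := by
  intro θ
  refine ⟨fun ω hω => alignment_aux hscale θ ω hω.1 hω.2, ?_⟩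
  set U : Set (E p) := {β ∈ S | ‖β‖ = 1} with hU
  rcases eq_empty_or_nonempty U with hUe | hUne
  · -- degenerate case: S ⊆ {0}, so the space is trivial
    have hS0 : S ⊆ {0} := by
      intro β hβ
      by_contra hβ0
      have : (‖β‖⁻¹ • β) ∈ U := by
        refine ⟨hscale _ β hβ, ?_⟩
        rw [norm_smul]
        simp [norm_ne_zero_iff.2 hβ0]
      rw [hUe] at this
      exact this
    have hθ0 : θ = 0 := by
      have h1 : Submodule.span ℝ S ≤ Submodule.span ℝ ({0} : Set (E p)) :=
        Submodule.span_mono hS0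
      rw [hspan, Submodule.span_zero_singleton] at h1
      have : θ ∈ (⊥ : Submodule ℝ (E p)) := h1 Submodule.mem_top
      simpa using this
    have hball : structBall S = ∅ := by
      rw [structBall, ← hU, hUe, convexHull_empty]
    have hdual : dualNorm S θ = 0 := by
      rw [dualNorm, hball]
      simp [Real.sSup_empty]
    have hinf : Metric.infDist θ S = 0 := by
      rcases eq_empty_or_nonempty S with hSe | ⟨x, hx⟩
      · rw [hSe]; exact Metric.infDist_empty
      · have : θ ∈ S := by rw [hθ0]; exact hS0 hx ▸ (by simpa [hS0 hx] using hx)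
        exact Metric.infDist_zero_of_mem this
    rw [hdual, hinf, hθ0]
    simp
  · obtain ⟨β₀, hβ₀⟩ := hUne
    have h0S : (0 : E p) ∈ S := by simpa using hscale 0 β₀ hβ₀.1
    have hSne : S.Nonempty := ⟨0, h0S⟩
    -- negation closure of U
    have hUneg : ∀ β ∈ U, -β ∈ U := by
      intro β hβ
      refine ⟨by simpa [neg_smul, one_smul] using hscale (-1) β hβ.1, by simp [hβ.2]⟩
    set T : Set ℝ := (fun β => (inner ℝ β θ : ℝ)) '' U with hT
    have hTne : T.Nonempty := ⟨_, ⟨β₀, hβ₀, rfl⟩⟩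
    have hTbdd : BddAbove T := by
      refine ⟨‖θ‖, ?_⟩
      rintro x ⟨β, hβ, rfl⟩
      calc (inner ℝ β θ : ℝ) ≤ ‖β‖ * ‖θ‖ := real_inner_le_norm β θ
        _ = ‖θ‖ := by rw [hβ.2, one_mul]
    set M : ℝ := sSup T with hM
    have hMmem : ∀ β ∈ U, (inner ℝ β θ : ℝ) ≤ M := fun β hβ => le_csSup hTbdd ⟨β, hβ, rfl⟩
    have hM0 : 0 ≤ M := by
      have h1 := hMmem β₀ hβ₀
      have h2 := hMmem (-β₀) (hUneg β₀ hβ₀)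
      rw [inner_neg_left] at h2
      linarith
    have hMabs : ∀ β ∈ U, |(inner ℝ β θ : ℝ)| ≤ M := by
      intro β hβ
      rw [abs_le]
      refine ⟨?_, hMmem β hβ⟩
      have := hMmem (-β) (hUneg β hβ)
      rw [inner_neg_left] at this
      linarith
    have hMnorm : M ≤ ‖θ‖ := by
      refine csSup_le hTne ?_
      rintro x ⟨β, hβ, rfl⟩
      calc (inner ℝ β θ : ℝ) ≤ ‖β‖ * ‖θ‖ := real_inner_le_norm β θ
        _ = ‖θ‖ := by rw [hβ.2, one_mul]
    -- dualNorm S θ = M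
    have hlin : IsLinearMap ℝ (fun β : E p => (inner ℝ β θ : ℝ)) :=
      ⟨fun a b => inner_add_left a b θ, fun c x => real_inner_smul_left x θ c⟩
    have hhull : structBall S ⊆ {x | (inner ℝ x θ : ℝ) ≤ M} := by
      rw [structBall, ← hU]
      exact convexHull_min (fun β hβ => hMmem β hβ) (convex_halfSpace_le hlin M)
    have hdualM : dualNorm S θ = M := by
      rw [dualNorm]
      apply le_antisymm
      · refine csSup_le ⟨_, ⟨β₀, subset_convexHull ℝ _ hβ₀, rfl⟩⟩ ?_
        rintro x ⟨β, hβ, rfl⟩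
        exact hhull hβ
      · refine csSup_le_csSup ?_ hTne ?_
        · exact ⟨M, by rintro x ⟨β, hβ, rfl⟩; exact hhull hβ⟩
        · rw [structBall, ← hU]
          exact Set.image_mono (subset_convexHull ℝ _)
    set d : ℝ := Metric.infDist θ S with hd
    have hd0 : 0 ≤ d := Metric.infDist_nonneg
    have hdθ : d ≤ ‖θ‖ := by
      simpa [dist_eq_norm] using Metric.infDist_le_dist_of_mem h0S
    -- upper bound : d ^ 2 ≤ ‖θ‖ ^ 2 - M ^ 2, via M ≤ sqrt(‖θ‖^2 - d^2)
    have hDnn : 0 ≤ ‖θ‖ ^ 2 - d ^ 2 := by nlinarith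
    have hkey : ∀ β ∈ U, (inner ℝ θ β : ℝ) ^ 2 ≤ ‖θ‖ ^ 2 - d ^ 2 := by
      intro β hβ
      set c : ℝ := inner ℝ θ β with hc
      have hmem : c • β ∈ S := hscale c β hβ.1
      have h1 : d ≤ ‖θ - c • β‖ := by
        simpa [dist_eq_norm] using Metric.infDist_le_dist_of_mem hmem
      have h2 : ‖θ - c • β‖ ^ 2 = ‖θ‖ ^ 2 - c ^ 2 := by
        rw [norm_sub_sq_real, real_inner_smul_right, ← hc, norm_smul, mul_pow,
          Real.norm_eq_abs, sq_abs, hβ.2]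
        ring
      nlinarith [norm_nonneg (θ - c • β)]
    have hMsqrt : M ≤ Real.sqrt (‖θ‖ ^ 2 - d ^ 2) := by
      refine csSup_le hTne ?_
      rintro x ⟨β, hβ, rfl⟩
      have h1 : (inner ℝ β θ : ℝ) ^ 2 ≤ ‖θ‖ ^ 2 - d ^ 2 := by
        rw [real_inner_comm]; exact hkey β hβ
      calc (inner ℝ β θ : ℝ) ≤ |(inner ℝ β θ : ℝ)| := le_abs_self _
        _ ≤ Real.sqrt (‖θ‖ ^ 2 - d ^ 2) := by
            rw [← Real.sqrt_sq_eq_abs]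
            exact Real.sqrt_le_sqrt h1
    have hupper : M ^ 2 ≤ ‖θ‖ ^ 2 - d ^ 2 := by
      have := Real.sq_sqrt hDnn
      nlinarith [Real.sqrt_nonneg (‖θ‖ ^ 2 - d ^ 2)]
    -- lower bound : ‖θ‖ ^ 2 - M ^ 2 ≤ d ^ 2
    have hD'nn : 0 ≤ ‖θ‖ ^ 2 - M ^ 2 := by nlinarith
    have hptwise : ∀ ω ∈ S, ‖θ‖ ^ 2 - M ^ 2 ≤ ‖θ - ω‖ ^ 2 := by
      intro ω hω
      by_cases h0 : ω = 0
      · subst h0; simp only [sub_zero]; nlinarith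
      · set β : E p := ‖ω‖⁻¹ • ω with hβdef
        have hβU : β ∈ U := by
          refine ⟨hscale _ ω hω, ?_⟩
          rw [hβdef, norm_smul]
          simp [norm_ne_zero_iff.2 h0]
        set c : ℝ := inner ℝ θ β with hc
        have hcM : |c| ≤ M := by
          rw [hc, real_inner_comm]; exact hMabs β hβU
        have hinner : (inner ℝ θ ω : ℝ) = ‖ω‖ * c := by
          have hn0 : ‖ω‖ ≠ 0 := norm_ne_zero_iff.2 h0
          rw [hc, hβdef, real_inner_smul_right]
          field_simp
        have hexp : ‖θ - ω‖ ^ 2 = ‖θ‖ ^ 2 - 2 * (‖ω‖ * c) + ‖ω‖ ^ 2 := by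
          rw [norm_sub_sq_real, hinner]
        have habs : c ^ 2 ≤ M ^ 2 := by nlinarith [abs_nonneg c, sq_abs c]
        nlinarith [sq_nonneg (c - ‖ω‖)]
    have hlower : ‖θ‖ ^ 2 - M ^ 2 ≤ d ^ 2 := by
      have hsqrt : Real.sqrt (‖θ‖ ^ 2 - M ^ 2) ≤ d := by
        by_contra hcon
        push_neg at hcon
        obtain ⟨y, hy, hdy⟩ := (Metric.infDist_lt_iff hSne).1 hcon
        have h1 : ‖θ - y‖ ^ 2 < ‖θ‖ ^ 2 - M ^ 2 := by
          have h2 : dist θ y ^ 2 < Real.sqrt (‖θ‖ ^ 2 - M ^ 2) ^ 2 := by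
            nlinarith [dist_nonneg (x := θ) (y := y), Real.sqrt_nonneg (‖θ‖ ^ 2 - M ^ 2)]
          rw [Real.sq_sqrt hD'nn] at h2
          simpa [dist_eq_norm] using h2
        exact absurd h1 (not_lt.2 (hptwise y hy))
      have := Real.sq_sqrt hD'nn
      nlinarith [Real.sqrt_nonneg (‖θ‖ ^ 2 - M ^ 2)]
    rw [hdualM]
    linarith
end
end

section
/- Let S ⊆ ℝ^p be a closed scale-invariant set whose linear span is ℝ^p and let β ∈ ℝ^p with β ≠ 0. Then the subdifferential of the dual norm ‖·‖_S⋆ at β, namely the set {g ∈ ℝ^p : ‖y‖_S⋆ ≥ ‖β‖_S⋆ + ⟨g, y − β⟩ for all y ∈ ℝ^p}, equals (1/r)·conv(Π(β;S)), where conv denotes the convex hull and r = ‖β‖_S⋆ > 0 is the common Euclidean norm of the elements of Π(β;S). -/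
open Metric Set Pointwise

noncomputable section

lemma isCompact_convexHull_aux {d : ℕ} {K : Set (E d)} (hK : IsCompact K) :
    IsCompact (convexHull ℝ K) := by
  classical
  rcases K.eq_empty_or_nonempty with rfl | ⟨x₀, hx₀⟩
  · simp only [convexHull_empty]; exact isCompact_empty
  · set n := d + 1 with hn
    set D : Set ((Fin n → ℝ) × (Fin n → E d)) :=
      (stdSimplex ℝ (Fin n)) ×ˢ (Set.univ.pi fun _ => K) with hD
    have hDc : IsCompact D := (isCompact_stdSimplex _ _).prod (isCompact_univ_pi fun _ => hK)
    set f : (Fin n → ℝ) × (Fin n → E d) → E d := fun q => ∑ i, q.1 i • q.2 i with hf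
    have hfc : Continuous f := continuous_finset_sum _ fun i _ =>
      ((continuous_apply i).comp continuous_fst).smul ((continuous_apply i).comp continuous_snd)
    have himg : f '' D = convexHull ℝ K := by
      apply Subset.antisymm
      · rintro _ ⟨⟨w, z⟩, ⟨hw, hz⟩, rfl⟩
        have h1 : ∑ i, w i = 1 := hw.2
        have := Finset.centerMass_mem_convexHull (R := ℝ) (s := K) Finset.univ
          (fun i _ => hw.1 i) (by rw [h1]; norm_num) (fun i _ => hz i (mem_univ i))
        rwa [Finset.centerMass_eq_of_sum_1 _ _ h1] at this
      · intro x hx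
        obtain ⟨ι, hι, z, w, hrange, hindep, hpos, hsum, hx⟩ :=
          eq_pos_convex_span_of_mem_convexHull hx
        have hcard : Fintype.card ι ≤ n := by
          have h1 := hindep.card_le_finrank_succ
          have h2 : Module.finrank ℝ (vectorSpan ℝ (Set.range z)) ≤ d := by
            have := Submodule.finrank_le (vectorSpan ℝ (Set.range z))
            rwa [finrank_euclideanSpace_fin] at this
          omega
        obtain ⟨e⟩ : Nonempty (ι ↪ Fin n) := by
          rw [Function.Embedding.nonempty_iff_card_le, Fintype.card_fin]; exact hcard
        set w' : Fin n → ℝ := Function.extend e w 0 with hw'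
        set z' : Fin n → E d := Function.extend e z (fun _ => x₀) with hz'
        have hw'e : ∀ i, w' (e i) = w i := fun i => e.injective.extend_apply w 0 i
        have hz'e : ∀ i, z' (e i) = z i := fun i => e.injective.extend_apply z _ i
        have hw'0 : ∀ j, j ∉ Finset.univ.image e → w' j = 0 := by
          intro j hj
          rw [hw', Function.extend_apply']
          · rfl
          · rintro ⟨i, rfl⟩; exact hj (Finset.mem_image_of_mem e (Finset.mem_univ i))
        have hsum' : ∀ (g : Fin n → ℝ) (gz : ι → ℝ), (∀ i, g (e i) = gz i) →
            (∀ j, j ∉ Finset.univ.image e → g j = 0) → ∑ j, g j = ∑ i, gz i := by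
          intro g gz hge hg0
          rw [← Finset.sum_subset (Finset.subset_univ (Finset.univ.image e))
            (fun j _ hj => hg0 j hj), Finset.sum_image (fun a _ b _ h => e.injective h)]
          exact Finset.sum_congr rfl fun i _ => hge i
        refine ⟨(w', z'), ⟨⟨fun j => ?_, ?_⟩, fun j _ => ?_⟩, ?_⟩
        · show 0 ≤ w' j
          by_cases hj : j ∈ Finset.univ.image e
          · obtain ⟨i, _, rfl⟩ := Finset.mem_image.mp hj
            rw [hw'e]; exact (hpos i).le
          · rw [hw'0 j hj]
        · show ∑ j, w' j = 1
          rw [hsum' w' w hw'e hw'0]; exact hsum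
        · show z' j ∈ K
          by_cases hj : j ∈ Finset.univ.image e
          · obtain ⟨i, _, rfl⟩ := Finset.mem_image.mp hj
            rw [hz'e]; exact hrange (Set.mem_range_self i)
          · rw [hz', Function.extend_apply']
            · exact hx₀
            · rintro ⟨i, rfl⟩; exact hj (Finset.mem_image_of_mem e (Finset.mem_univ i))
        · show ∑ j, w' j • z' j = x
          rw [← hx]
          rw [← Finset.sum_subset (Finset.subset_univ (Finset.univ.image e))
            (fun j _ hj => by rw [hw'0 j hj, zero_smul]),
            Finset.sum_image (fun a _ b _ h => e.injective h)]
          exact Finset.sum_congr rfl fun i _ => by rw [hw'e, hz'e]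
    rw [← himg]
    exact hDc.image hfc

lemma sq_eq_of_nonneg {a b : ℝ} (ha : 0 ≤ a) (hb : 0 ≤ b) (h : a ^ 2 = b ^ 2) : a = b :=
  le_antisymm (by nlinarith) (by nlinarith)

/-- the subdifferential of the dual norm at `β ≠ 0` equals
`(1/r) • conv(Π(β;S))` where `r = ‖β‖_S⋆`. -/
theorem subdiff_dualNorm (p : ℕ) (S : Set (E p)) (hclosed : IsClosed S)
    (hscale : ScaleInvariant S) (hspan : Submodule.span ℝ S = ⊤)
    (β : E p) (hβ : β ≠ 0) :
    {g : E p | ∀ y : E p, dualNorm S y ≥ dualNorm S β + (inner ℝ g (y - β) : ℝ)} =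
      (dualNorm S β)⁻¹ • convexHull ℝ (projSet S β) := by
  classical
  set K₀ : Set (E p) := {s ∈ S | ‖s‖ = 1} with hK₀def
  have hSB : structBall S = convexHull ℝ K₀ := rfl
  -- linearity of inner ℝ products
  have hlin : ∀ θ : E p, IsLinearMap ℝ (fun x : E p => (inner ℝ x θ : ℝ)) := fun θ =>
    ⟨fun x y => inner_add_left x y θ, fun c x => real_inner_smul_left x θ c⟩
  -- K₀ compact
  have hK₀c : IsCompact K₀ := by
    have : K₀ = S ∩ Metric.sphere 0 1 := by
      ext x; simp [hK₀def, mem_sphere_zero_iff_norm]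
    rw [this]
    exact (isCompact_sphere (0 : E p) 1).inter_left hclosed
  -- some element of S with nonzero inner ℝ product with β
  obtain ⟨s₀, hs₀S, hs₀⟩ : ∃ s ∈ S, (inner ℝ s β : ℝ) ≠ 0 := by
    by_contra h
    push_neg at h
    have hle : Submodule.span ℝ S ≤ LinearMap.ker (IsLinearMap.mk' _ (hlin β)) :=
      Submodule.span_le.mpr fun s hs => LinearMap.mem_ker.mpr (h s hs)
    have hβk : β ∈ LinearMap.ker (IsLinearMap.mk' _ (hlin β)) :=
      hle (hspan ▸ Submodule.mem_top)
    have : (inner ℝ β β : ℝ) = 0 := LinearMap.mem_ker.mp hβk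
    exact hβ (inner_self_eq_zero.mp this)
  have hs₀ne : s₀ ≠ 0 := by rintro rfl; exact hs₀ (by simp)
  -- a unit element with positive inner ℝ product
  obtain ⟨u₁, hu₁K, hu₁pos⟩ : ∃ u ∈ K₀, (0 : ℝ) < inner ℝ u β := by
    rcases lt_or_gt_of_ne hs₀ with hneg | hpos
    · refine ⟨(-‖s₀‖⁻¹) • s₀, ⟨hscale _ _ hs₀S, ?_⟩, ?_⟩
      · rw [norm_smul, norm_neg, norm_inv, norm_norm]
        exact inv_mul_cancel₀ (norm_ne_zero_iff.mpr hs₀ne)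
      · rw [real_inner_smul_left]
        have : 0 < ‖s₀‖⁻¹ := inv_pos.mpr (norm_pos_iff.mpr hs₀ne)
        nlinarith
    · refine ⟨‖s₀‖⁻¹ • s₀, ⟨hscale _ _ hs₀S, ?_⟩, ?_⟩
      · rw [norm_smul, norm_inv, norm_norm]
        exact inv_mul_cancel₀ (norm_ne_zero_iff.mpr hs₀ne)
      · rw [real_inner_smul_left]
        have : 0 < ‖s₀‖⁻¹ := inv_pos.mpr (norm_pos_iff.mpr hs₀ne)
        nlinarith
  -- the maximizer over K₀
  obtain ⟨u₀, hu₀K, hmax'⟩ := hK₀c.exists_isMaxOn ⟨u₁, hu₁K⟩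
    ((continuous_id.inner continuous_const).continuousOn :
      ContinuousOn (fun x : E p => (inner ℝ x β : ℝ)) K₀)
  have hmax : ∀ v ∈ K₀, (inner ℝ v β : ℝ) ≤ inner ℝ u₀ β := fun v hv => hmax' hv
  set r : ℝ := (inner ℝ u₀ β : ℝ) with hrdef
  have hr : 0 < r := lt_of_lt_of_le hu₁pos (hmax u₁ hu₁K)
  have hu₀B : u₀ ∈ structBall S := subset_convexHull ℝ _ hu₀K
  -- upper bounds over the structure ball
  have hub : ∀ (θ : E p) (c : ℝ), (∀ v ∈ K₀, (inner ℝ v θ : ℝ) ≤ c) →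
      ∀ b ∈ structBall S, (inner ℝ b θ : ℝ) ≤ c := by
    intro θ c h b hb
    have : structBall S ⊆ {x : E p | (inner ℝ x θ : ℝ) ≤ c} := by
      rw [hSB]
      exact convexHull_min h (convex_halfSpace_le (hlin θ) c)
    exact this hb
  have hnormle : ∀ b ∈ structBall S, ‖b‖ ≤ 1 := by
    intro b hb
    have : structBall S ⊆ Metric.closedBall (0 : E p) 1 := by
      rw [hSB]
      exact convexHull_min (fun v hv => by
        simp only [Metric.mem_closedBall, dist_zero_right]; exact hv.2.le)
        (convex_closedBall 0 1)
    simpa [Metric.mem_closedBall, dist_zero_right] using this hb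
  have hbdd : ∀ θ : E p, BddAbove ((fun b => (inner ℝ b θ : ℝ)) '' structBall S) := by
    intro θ
    refine ⟨‖θ‖, ?_⟩
    rintro _ ⟨b, hb, rfl⟩
    calc (inner ℝ b θ : ℝ) ≤ ‖b‖ * ‖θ‖ := real_inner_le_norm b θ
      _ ≤ 1 * ‖θ‖ := by
          have := hnormle b hb
          nlinarith [norm_nonneg θ]
      _ = ‖θ‖ := one_mul _
  have hdual_eq : ∀ (θ : E p) (c : ℝ), (∀ v ∈ K₀, (inner ℝ v θ : ℝ) ≤ c) →
      (∃ b ∈ structBall S, (inner ℝ b θ : ℝ) = c) → dualNorm S θ = c := by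
    rintro θ c hle ⟨b, hbB, hbc⟩
    apply le_antisymm
    · exact csSup_le ⟨_, ⟨b, hbB, rfl⟩⟩ (by rintro _ ⟨b', hb', rfl⟩; exact hub θ c hle b' hb')
    · exact le_csSup (hbdd θ) ⟨b, hbB, hbc⟩
  have hrβ : dualNorm S β = r := hdual_eq β r hmax ⟨u₀, hu₀B, rfl⟩
  have h2β : dualNorm S (β + β) = r + r := by
    apply hdual_eq
    · intro v hv
      rw [inner_add_right]
      have := hmax v hv
      linarith
    · exact ⟨u₀, hu₀B, by rw [inner_add_right]⟩
  have h0 : dualNorm S 0 = 0 :=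
    hdual_eq 0 0 (fun v _ => by rw [inner_zero_right]) ⟨u₀, hu₀B, by rw [inner_zero_right]⟩
  have hBclosed : IsClosed (structBall S) := by
    rw [hSB]; exact (isCompact_convexHull_aux hK₀c).isClosed
  -- the exposed face
  set F : Set (E p) := structBall S ∩ {x : E p | (inner ℝ x β : ℝ) = r} with hFdef
  -- Step A : the subdifferential equals F
  have hLHS : {g : E p | ∀ y : E p, dualNorm S y ≥ dualNorm S β + (inner ℝ g (y - β) : ℝ)} = F := by
    ext g
    constructor
    · intro hg
      have h1 : (inner ℝ g β : ℝ) ≤ r := by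
        have := hg (β + β)
        rw [h2β, hrβ, add_sub_cancel_left] at this
        linarith
      have h2 : r ≤ (inner ℝ g β : ℝ) := by
        have := hg 0
        rw [h0, hrβ, zero_sub, inner_neg_right] at this
        linarith
      have hgb : (inner ℝ g β : ℝ) = r := le_antisymm h1 h2
      have hgy : ∀ y : E p, (inner ℝ g y : ℝ) ≤ dualNorm S y := by
        intro y
        have := hg y
        rw [hrβ, inner_sub_right, hgb] at this
        linarith
      refine ⟨?_, hgb⟩
      by_contra hgB
      obtain ⟨f, c, hfs, hfg⟩ :=
        geometric_hahn_banach_closed_point (hSB ▸ convex_convexHull ℝ K₀) hBclosed hgB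
      set yf := (InnerProductSpace.toDual ℝ (E p)).symm f with hyf
      have hfx : ∀ x : E p, (inner ℝ yf x : ℝ) = f x := fun x => by
        rw [hyf]; exact InnerProductSpace.toDual_symm_apply
      have hsup : dualNorm S yf ≤ c := by
        refine csSup_le ⟨_, ⟨u₀, hu₀B, rfl⟩⟩ ?_
        rintro _ ⟨b, hb, rfl⟩
        show (inner ℝ b yf : ℝ) ≤ c
        rw [real_inner_comm, hfx]
        exact (hfs b hb).le
      have hc1 : (inner ℝ g yf : ℝ) ≤ c := le_trans (hgy yf) hsup
      rw [real_inner_comm, hfx] at hc1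
      linarith
    · rintro ⟨hgB, hgb⟩ y
      have h1 : (inner ℝ g y : ℝ) ≤ dualNorm S y := le_csSup (hbdd y) ⟨g, hgB, rfl⟩
      rw [hrβ, inner_sub_right]
      simp only [mem_setOf_eq] at hgb
      rw [hgb]
      linarith
  -- the maximizing unit vectors
  set M : Set (E p) := {u ∈ K₀ | (inner ℝ u β : ℝ) = r} with hMdef
  -- Step B : F = convexHull M
  have hstepB : F = convexHull ℝ M := by
    apply Subset.antisymm
    · rintro g ⟨hgB, hgr⟩
      simp only [mem_setOf_eq] at hgr
      rw [hSB, convexHull_eq] at hgB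
      obtain ⟨ι, t, w, z, hw0, hw1, hzK, hcm⟩ := hgB
      have hins : ∀ i ∈ t, (inner ℝ (z i) β : ℝ) ≤ r := fun i hi => hmax (z i) (hzK i hi)
      have hgsum : (inner ℝ g β : ℝ) = ∑ i ∈ t, w i * (inner ℝ (z i) β : ℝ) := by
        rw [← hcm, Finset.centerMass_eq_of_sum_1 _ _ hw1, sum_inner]
        exact Finset.sum_congr rfl fun i _ => real_inner_smul_left _ _ _
      have hsum0 : ∑ i ∈ t, w i * (r - (inner ℝ (z i) β : ℝ)) = 0 := by
        have : ∑ i ∈ t, w i * (r - (inner ℝ (z i) β : ℝ))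
            = (∑ i ∈ t, w i) * r - ∑ i ∈ t, w i * (inner ℝ (z i) β : ℝ) := by
          rw [Finset.sum_mul, ← Finset.sum_sub_distrib]
          exact Finset.sum_congr rfl fun i _ => by ring
        rw [this, hw1, one_mul, ← hgsum, hgr, sub_self]
      have hzero : ∀ i ∈ t, w i * (r - (inner ℝ (z i) β : ℝ)) = 0 :=
        (Finset.sum_eq_zero_iff_of_nonneg fun i hi =>
          mul_nonneg (hw0 i hi) (by linarith [hins i hi])).mp hsum0
      rw [← Finset.centerMass_filter_ne_zero (t := t) (w := w) z] at hcm
      rw [← hcm]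
      apply Finset.centerMass_mem_convexHull
      · exact fun i hi => hw0 i (Finset.mem_filter.mp hi).1
      · rw [Finset.sum_filter_ne_zero, hw1]; norm_num
      · intro i hi
        obtain ⟨hit, hwne⟩ := Finset.mem_filter.mp hi
        have hzi : (inner ℝ (z i) β : ℝ) = r := by
          rcases mul_eq_zero.mp (hzero i hit) with h | h
          · exact absurd h hwne
          · linarith
        exact ⟨hzK i hit, hzi⟩
    · apply convexHull_min
      · rintro u ⟨huK, hur⟩
        exact ⟨subset_convexHull ℝ _ huK, hur⟩
      · exact (hSB ▸ convex_convexHull ℝ K₀).inter (convex_hyperplane (hlin β) r)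
  -- Cauchy–Schwarz-type bound over S
  have hCS : ∀ ω ∈ S, (inner ℝ ω β : ℝ) ≤ ‖ω‖ * r := by
    intro ω hω
    rcases eq_or_ne ω 0 with rfl | hne
    · simp
    · have hnorm : (0 : ℝ) < ‖ω‖ := norm_pos_iff.mpr hne
      have hu : ‖ω‖⁻¹ • ω ∈ K₀ := by
        refine ⟨hscale _ _ hω, ?_⟩
        rw [norm_smul, norm_inv, norm_norm]
        exact inv_mul_cancel₀ hnorm.ne'
      have := hmax _ hu
      rw [real_inner_smul_left] at this
      calc (inner ℝ ω β : ℝ) = ‖ω‖ * (‖ω‖⁻¹ * (inner ℝ ω β : ℝ)) := by field_simp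
        _ ≤ ‖ω‖ * r := by nlinarith
  have hωstar : r • u₀ ∈ S := hscale r u₀ hu₀K.1
  have hd0 : ‖β - r • u₀‖ ^ 2 = ‖β‖ ^ 2 - r ^ 2 := by
    rw [norm_sub_sq_real, real_inner_smul_right, norm_smul]
    rw [real_inner_comm, ← hrdef, hu₀K.2]
    rw [Real.norm_eq_abs, abs_of_pos hr]
    ring
  have hdist : Metric.infDist β S = ‖β - r • u₀‖ := by
    apply le_antisymm
    · rw [← dist_eq_norm]
      exact Metric.infDist_le_dist_of_mem hωstar
    · obtain ⟨ω', hω'S, hω'⟩ := hclosed.exists_infDist_eq_dist ⟨_, hωstar⟩ β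
      rw [hω', dist_eq_norm]
      have hsq : ‖β‖ ^ 2 - r ^ 2 ≤ ‖β - ω'‖ ^ 2 := by
        rw [norm_sub_sq_real, real_inner_comm]
        have := hCS ω' hω'S
        nlinarith [sq_nonneg (‖ω'‖ - r)]
      nlinarith [norm_nonneg (β - r • u₀), norm_nonneg (β - ω'), hd0]
  -- Step C : projSet = r • M
  have hproj : projSet S β = r • M := by
    ext ω
    constructor
    · rintro ⟨hωS, hωd⟩
      rw [hdist] at hωd
      have hsq : ‖β - ω‖ ^ 2 = ‖β‖ ^ 2 - r ^ 2 := by rw [hωd, hd0]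
      rw [norm_sub_sq_real, real_inner_comm] at hsq
      have hcs := hCS ω hωS
      have hω2 : (‖ω‖ - r) ^ 2 ≤ 0 := by nlinarith
      have hωr : ‖ω‖ = r := by
        have := sq_eq_zero_iff.mp (le_antisymm hω2 (sq_nonneg _))
        linarith [sub_eq_zero.mp this]
      have hir : (inner ℝ ω β : ℝ) = r ^ 2 := by nlinarith
      refine Set.mem_smul_set.mpr ⟨r⁻¹ • ω, ⟨⟨hscale _ _ hωS, ?_⟩, ?_⟩, ?_⟩
      · rw [norm_smul, norm_inv, Real.norm_eq_abs, abs_of_pos hr, hωr]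
        exact inv_mul_cancel₀ hr.ne'
      · show (inner ℝ (r⁻¹ • ω) β : ℝ) = r
        rw [real_inner_smul_left, hir]
        field_simp
      · rw [smul_smul, mul_inv_cancel₀ hr.ne', one_smul]
    · intro hω
      obtain ⟨u, ⟨⟨huS, hu1⟩, hur⟩, rfl⟩ := Set.mem_smul_set.mp hω
      refine ⟨hscale r u huS, ?_⟩
      rw [hdist]
      apply sq_eq_of_nonneg (norm_nonneg _) (norm_nonneg _)
      rw [hd0, norm_sub_sq_real, real_inner_smul_right, norm_smul,
        Real.norm_eq_abs, abs_of_pos hr, hu1, real_inner_comm, hur]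
      ring
  -- conclusion
  rw [hLHS, hstepB, hrβ, hproj, convexHull_smul, smul_smul, inv_mul_cancel₀ hr.ne', one_smul]


end
end

section
/- Let A ⊆ ℝ^p be a nonempty closed set that is closed under entrywise sign changes, i.e. β ∈ A implies s∘β ∈ A for every sign vector s ∈ {−1,+1}^p (where ∘ is the entrywise product). Then for every β ∈ ℝ^p and every θ ∈ Π(β;A), one has θᵢ·βᵢ ≥ 0 for every coordinate i ∈ {1,…,p}. -/
open Metric Set

noncomputable section

/-- if the nonempty closed set `A` is closed under entrywise sign changes,
then any projection `θ` of `β` onto `A` satisfies `θᵢ βᵢ ≥ 0` for every coordinate. -/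
theorem proj_sign_invariant (p : ℕ) (A : Set (E p)) (hne : A.Nonempty)
    (hclosed : IsClosed A)
    (hsign : ∀ s : Fin p → ℝ, (∀ i, s i = 1 ∨ s i = -1) →
      ∀ β ∈ A, (WithLp.toLp 2 (fun i => s i * β i) : E p) ∈ A) :
    ∀ β : E p, ∀ θ ∈ projSet A β, ∀ i : Fin p, θ i * β i ≥ 0 := by
  intro β θ hθ i
  by_contra hneg
  push_neg at hneg
  set s : Fin p → ℝ := fun j => if j = i then -1 else 1 with hs
  have hsval : ∀ j, s j = 1 ∨ s j = -1 := by
    intro j; by_cases h : j = i <;> simp [hs, h]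
  have hθ' : (WithLp.toLp 2 (fun j => s j * θ j) : E p) ∈ A := hsign s hsval θ hθ.1
  set θ' : E p := (WithLp.toLp 2 (fun j => s j * θ j) : E p) with hθ'def
  have hlt : ‖β - θ'‖ < ‖β - θ‖ := by
    have hsq : ‖β - θ'‖ ^ 2 < ‖β - θ‖ ^ 2 := by
      rw [EuclideanSpace.norm_eq, EuclideanSpace.norm_eq,
        Real.sq_sqrt (by positivity), Real.sq_sqrt (by positivity)]
      apply Finset.sum_lt_sum
      · intro j _
        by_cases h : j = i
        · subst h
          simp only [θ', hs, PiLp.sub_apply, PiLp.toLp_apply, if_pos rfl, if_true, neg_one_mul,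
            Real.norm_eq_abs, sq_abs]
          nlinarith [hneg]
        · simp [θ', hs, h, PiLp.toLp_apply]
      · refine ⟨i, Finset.mem_univ i, ?_⟩
        simp only [θ', hs, PiLp.sub_apply, PiLp.toLp_apply, if_pos rfl, if_true, neg_one_mul,
          Real.norm_eq_abs, sq_abs]
        nlinarith [hneg]
    have h1 : (0:ℝ) ≤ ‖β - θ'‖ := norm_nonneg _
    have h2 : (0:ℝ) ≤ ‖β - θ‖ := norm_nonneg _
    nlinarith
  have hle : Metric.infDist β A ≤ ‖β - θ'‖ := by
    rw [← dist_eq_norm]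
    exact Metric.infDist_le_dist_of_mem hθ'
  have := hθ.2
  linarith
end
end

section
/- Let A ⊆ ℝ^p be a nonempty closed set that is closed under permutations of the entries, i.e. β ∈ A implies π(β) ∈ A for every permutation π of the coordinates. Then for every β ∈ ℝ^p and every θ ∈ Π(β;A), the vectors β and θ are similarly ordered: βᵢ > βⱼ implies θᵢ ≥ θⱼ for all coordinates i, j ∈ {1,…,p}. -/
open Metric Set

noncomputable section

/-- if the nonempty closed set `A` is closed under permutations of the
entries, then `β` and any projection `θ` of `β` onto `A` are similarly ordered:
`βᵢ > βⱼ` implies `θᵢ ≥ θⱼ`. -/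
theorem proj_perm_invariant (p : ℕ) (A : Set (E p)) (hne : A.Nonempty)
    (hclosed : IsClosed A)
    (hperm : ∀ π : Equiv.Perm (Fin p), ∀ β ∈ A, (WithLp.toLp 2 (fun i => β (π i)) : E p) ∈ A) :
    ∀ β : E p, ∀ θ ∈ projSet A β, ∀ i j : Fin p, β i > β j → θ i ≥ θ j := by
  intro β θ hθ i j hβ
  by_contra hlt
  push_neg at hlt
  have hij : i ≠ j := by
    intro h; subst h; exact lt_irrefl _ hβ
  obtain ⟨hθA, hθd⟩ := hθ
  set θ' : E p := (WithLp.toLp 2 (fun k => θ (Equiv.swap i j k)) : E p) with hθ'def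
  have hθ'A : θ' ∈ A := hperm (Equiv.swap i j) θ hθA
  -- sums of squares
  have hsum : ∑ k, (β k - θ' k) ^ 2 < ∑ k, (β k - θ k) ^ 2 := by
    have hsplit : ∀ g : Fin p → ℝ,
        ∑ k, g k = g i + g j + ∑ k ∈ (Finset.univ.erase i).erase j, g k := by
      intro g
      rw [← Finset.add_sum_erase _ g (Finset.mem_univ i),
        ← Finset.add_sum_erase _ g (Finset.mem_erase.mpr ⟨hij.symm, Finset.mem_univ j⟩)]
      ring
    rw [hsplit, hsplit]
    have heq : ∑ k ∈ (Finset.univ.erase i).erase j, (β k - θ' k) ^ 2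
        = ∑ k ∈ (Finset.univ.erase i).erase j, (β k - θ k) ^ 2 := by
      apply Finset.sum_congr rfl
      intro k hk
      simp only [Finset.mem_erase] at hk
      have : Equiv.swap i j k = k := Equiv.swap_apply_of_ne_of_ne hk.2.1 hk.1
      show (β k - θ (Equiv.swap i j k)) ^ 2 = (β k - θ k) ^ 2
      rw [this]
    rw [heq]
    have h1 : θ' i = θ j := by show θ (Equiv.swap i j i) = θ j; rw [Equiv.swap_apply_left]
    have h2 : θ' j = θ i := by show θ (Equiv.swap i j j) = θ i; rw [Equiv.swap_apply_right]
    rw [h1, h2]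
    nlinarith [hβ, hlt]
  have hnorm : ‖β - θ'‖ < ‖β - θ‖ := by
    rw [EuclideanSpace.norm_eq, EuclideanSpace.norm_eq]
    apply Real.sqrt_lt_sqrt
    · positivity
    · simpa [sub_sq, sq_abs] using hsum
  have hle : Metric.infDist β A ≤ ‖β - θ'‖ := by
    simpa [dist_eq_norm] using Metric.infDist_le_dist_of_mem hθ'A
  rw [hθd] at hnorm
  linarith

end
end

section
/- Let S ⊆ ℝ^p be a nonempty closed scale-invariant set such that for every u ∈ S and every coordinate i ∈ {1,…,p}, the vector u − uᵢeᵢ (u with its i-th entry set to zero) belongs to S. Then for every β ∈ ℝ^p and every θ ∈ Π(β;S), the support of θ is contained in the support of β; that is, βᵢ = 0 implies θᵢ = 0 for every i. -/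
open Metric Set

noncomputable section

/-- if `S` is a nonempty closed scale-invariant set that is stable under
zeroing out any single entry, then any projection `θ` of `β` onto `S` has support
contained in the support of `β`: `βᵢ = 0` implies `θᵢ = 0`. -/
theorem proj_support_monotone (p : ℕ) (S : Set (E p)) (hne : S.Nonempty)
    (hclosed : IsClosed S) (hscale : ScaleInvariant S)
    (hzero : ∀ u ∈ S, ∀ i : Fin p, (WithLp.toLp 2 (Function.update u i 0) : E p) ∈ S) :
    ∀ β : E p, ∀ θ ∈ projSet S β, ∀ i : Fin p, β i = 0 → θ i = 0 := by
  intro β θ hθ i hβ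
  obtain ⟨hθS, hθd⟩ := hθ
  set θ' : E p := WithLp.toLp 2 (Function.update θ i 0) with hθ'def
  have hθ'S : θ' ∈ S := hzero θ hθS i
  have h1 : ‖β - θ‖ ≤ ‖β - θ'‖ := by
    rw [hθd]
    have := Metric.infDist_le_dist_of_mem (x := β) hθ'S
    rwa [dist_eq_norm] at this
  have h2 : ‖β - θ‖ ^ 2 ≤ ‖β - θ'‖ ^ 2 :=
    pow_le_pow_left₀ (norm_nonneg _) h1 2
  have hnorm : ∀ x : E p, ‖x‖ ^ 2 = ∑ j, ‖x j‖ ^ 2 := by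
    intro x
    rw [EuclideanSpace.norm_eq, Real.sq_sqrt]
    positivity
  rw [hnorm, hnorm] at h2
  have hsum : ∑ j, ‖(β - θ) j‖ ^ 2
      = (∑ j, ‖(β - θ') j‖ ^ 2) + ‖θ i‖ ^ 2 := by
    have : ∀ j, ‖(β - θ) j‖ ^ 2
        = ‖(β - θ') j‖ ^ 2 + (if j = i then ‖θ i‖ ^ 2 else 0) := by
      intro j
      by_cases hj : j = i
      · subst hj
        simp [hθ'def, hβ]
      · simp [hθ'def, Function.update_of_ne hj, hj]
    rw [Finset.sum_congr rfl fun j _ => this j, Finset.sum_add_distrib,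
      Finset.sum_ite_eq' Finset.univ i (fun _ => ‖θ i‖ ^ 2)]
    simp
  rw [hsum] at h2
  have : ‖θ i‖ ^ 2 ≤ 0 := by linarith
  have := pow_eq_zero_iff (n := 2) (by norm_num) |>.mp
    (le_antisymm this (by positivity))
  simpa using this

end
end

section
/- Let S ⊆ ℝ^p be a nonempty closed set that is closed under entrywise sign changes and under permutations of the entries, and suppose every element of S has at most k nonzero entries (for a fixed 1 ≤ k ≤ p). Then for every β ∈ ℝ^p and every θ ∈ Π(β;S), one has θᵢ = 0 for every coordinate i with |βᵢ| < β̄ₖ, where β̄ₖ is the k-th largest absolute value of the entries of β. -/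
open Metric Set

noncomputable section

/-- The absolute values of the entries of `β`, sorted in descending order. -/
def sortedAbs {p : ℕ} (β : E p) : List ℝ :=
  List.insertionSort (· ≥ ·) (List.ofFn fun i => |β i|)


private theorem countP_ofFn' (p : ℕ) (f : Fin p → ℝ) (q : ℝ → Prop) [DecidablePred q] :
    (List.ofFn f).countP (fun x => decide (q x)) =
      (Finset.univ.filter fun j => q (f j)).card := by
  have h1 : ((List.ofFn f : List ℝ) : Multiset ℝ) = Finset.univ.val.map f := by
    rw [Fin.univ_val_map]
  have h2 : Multiset.countP (fun x => decide (q x)) ((List.ofFn f : List ℝ) : Multiset ℝ)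
      = (List.ofFn f).countP (fun x => decide (q x)) := by
    rw [Multiset.coe_countP]; simp
  rw [← h2, h1, Multiset.countP_map, Finset.card_def, Finset.filter_val]
  exact congrArg _ (Multiset.filter_congr (fun a _ => by simp))

private theorem card_ge' (p k : ℕ) (hk1 : 1 ≤ k) (hkp : k ≤ p) (β : E p) :
    k ≤ (Finset.univ.filter fun j => (sortedAbs β).getD (k-1) 0 ≤ |β j|).card := by
  set l := sortedAbs β with hl
  have hlen : l.length = p := by simp [hl, sortedAbs]
  have hsort : l.Pairwise (· ≥ ·) := List.pairwise_insertionSort _ _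
  set t := l.getD (k-1) 0 with ht
  have hk1p : k - 1 < l.length := by omega
  have hget : ∀ n (hn : n < l.length), n < k → t ≤ l.get ⟨n, hn⟩ := by
    intro n hn hnk
    have := hsort.rel_get_of_le (a := ⟨n, hn⟩) (b := ⟨k-1, hk1p⟩) (by
      rw [Fin.le_def]; simp; omega)
    rw [ht, List.getD_eq_getElem l 0 hk1p]
    simpa using this
  have htake : (l.take k).countP (fun x => decide (t ≤ x)) = (l.take k).length := by
    rw [List.countP_eq_length]
    intro a ha
    rw [List.mem_take_iff_getElem] at ha
    obtain ⟨n, hn, rfl⟩ := ha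
    simp only [decide_eq_true_eq]
    exact hget n (by omega) (by omega)
  have hlentake : (l.take k).length = k := by
    rw [List.length_take]; omega
  have hcount : k ≤ l.countP (fun x => decide (t ≤ x)) := by
    calc k = (l.take k).countP (fun x => decide (t ≤ x)) := by rw [htake, hlentake]
    _ ≤ (l.take k).countP (fun x => decide (t ≤ x))
        + (l.drop k).countP (fun x => decide (t ≤ x)) := Nat.le_add_right _ _
    _ = l.countP (fun x => decide (t ≤ x)) := by
        rw [← List.countP_append, List.take_append_drop]
  have hperm : l.countP (fun x => decide (t ≤ x))
      = (List.ofFn fun j => |β j|).countP (fun x => decide (t ≤ x)) :=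
    (List.perm_insertionSort _ _).countP_eq _
  rw [← countP_ofFn' p (fun j => |β j|) (fun x => t ≤ x)]
  exact hperm ▸ hcount

/-- if the nonempty closed set `S` is sign- and permutation-invariant and
all of its elements have at most `k` nonzero entries, then any projection `θ` of `β`
onto `S` vanishes on every coordinate `i` with `|βᵢ| < β̄ₖ` (the `k`-th largest
absolute value of the entries of `β`). -/
theorem proj_card_k (p k : ℕ) (hk1 : 1 ≤ k) (hkp : k ≤ p)
    (S : Set (E p)) (hne : S.Nonempty) (hclosed : IsClosed S)
    (hsign : ∀ s : Fin p → ℝ, (∀ i, s i = 1 ∨ s i = -1) →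
      ∀ β ∈ S, (WithLp.toLp 2 (fun i => s i * β i) : E p) ∈ S)
    (hperm : ∀ π : Equiv.Perm (Fin p), ∀ β ∈ S, (WithLp.toLp 2 (fun i => β (π i)) : E p) ∈ S)
    (hcard : ∀ u ∈ S, (Finset.univ.filter fun i => u i ≠ 0).card ≤ k) :
    ∀ β : E p, ∀ θ ∈ projSet S β, ∀ i : Fin p,
      |β i| < (sortedAbs β).getD (k - 1) 0 → θ i = 0 := by
  intro β θ hθ i hib
  obtain ⟨hθS, hθd⟩ := hθ
  by_contra hti
  set t := (sortedAbs β).getD (k-1) 0 with htdef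
  have hA : k ≤ (Finset.univ.filter fun j => t ≤ |β j|).card := card_ge' p k hk1 hkp β
  set A := Finset.univ.filter fun j => t ≤ |β j| with hAdef
  set B := Finset.univ.filter fun j => θ j ≠ 0 with hBdef
  have hB : B.card ≤ k := hcard θ hθS
  have hiB : i ∈ B := by simp [hBdef, hti]
  have hiA : i ∉ A := by simp [hAdef]; exact hib
  have hABne : (A \ B).Nonempty := by
    rw [Finset.sdiff_nonempty]
    intro hAB
    have h1 : A ⊆ B.erase i := fun x hx =>
      Finset.mem_erase.2 ⟨fun he => hiA (he ▸ hx), hAB hx⟩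
    have h2 := Finset.card_le_card h1
    rw [Finset.card_erase_of_mem hiB] at h2
    have : 1 ≤ B.card := Finset.card_pos.2 ⟨i, hiB⟩
    omega
  obtain ⟨j, hj⟩ := hABne
  rw [Finset.mem_sdiff] at hj
  have hjt : t ≤ |β j| := by have := hj.1; simp [hAdef] at this; exact this
  have hθj : θ j = 0 := by have := hj.2; simp [hBdef] at this; exact this
  have hij : i ≠ j := fun h => hti (h ▸ hθj)
  have hblt : |β i| < |β j| := lt_of_lt_of_le hib hjt
  set ε : ℝ := if 0 ≤ β j * θ i then 1 else -1 with hεdef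
  set s : Fin p → ℝ := fun m => if m = j then ε else 1 with hsdef
  have hs : ∀ m, s m = 1 ∨ s m = -1 := by
    intro m
    simp only [hsdef, hεdef]
    split_ifs <;> simp
  have hθ'' : (WithLp.toLp 2 (fun m => θ (Equiv.swap i j m)) : E p) ∈ S := hperm _ θ hθS
  have hθ'S : (WithLp.toLp 2 (fun m => s m * θ (Equiv.swap i j m)) : E p) ∈ S := hsign s hs _ hθ''
  set θ' : E p := WithLp.toLp 2 (fun m => s m * θ (Equiv.swap i j m)) with hθ'def
  have hθ'i : θ' i = 0 := by
    show s i * θ (Equiv.swap i j i) = 0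
    rw [Equiv.swap_apply_left, hθj, mul_zero]
  have hθ'j : θ' j = ε * θ i := by
    show s j * θ (Equiv.swap i j j) = ε * θ i
    rw [Equiv.swap_apply_right]
    simp [hsdef]
  have hθ'm : ∀ m, m ≠ i → m ≠ j → θ' m = θ m := by
    intro m hmi hmj
    show s m * θ (Equiv.swap i j m) = θ m
    rw [Equiv.swap_apply_of_ne_of_ne hmi hmj]
    simp [hsdef, hmj]
  have hε2 : ε^2 = 1 := by simp only [hεdef]; split_ifs <;> norm_num
  have hεm : ε * (β j * θ i) = |β j| * |θ i| := by
    rw [← abs_mul]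
    simp only [hεdef]
    split_ifs with h
    · rw [abs_of_nonneg h]; ring
    · rw [abs_of_neg (lt_of_not_ge h)]; ring
  have hlt : ‖β - θ'‖ < ‖β - θ‖ := by
    rw [EuclideanSpace.norm_eq, EuclideanSpace.norm_eq]
    apply Real.sqrt_lt_sqrt (by positivity)
    have hsub : ∀ (x : E p) (m : Fin p), ‖(β - x) m‖^2 = (β m - x m)^2 := by
      intro x m; rw [PiLp.sub_apply, Real.norm_eq_abs, sq_abs]
    have hsplit : ∀ (H : Fin p → ℝ), ∑ m, H m
        = ∑ m ∈ (Finset.univ.erase i).erase j, H m + H j + H i := by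
      intro H
      rw [Finset.sum_erase_add _ _ (Finset.mem_erase.2 ⟨(Ne.symm hij), Finset.mem_univ j⟩),
        Finset.sum_erase_add _ _ (Finset.mem_univ i)]
    rw [hsplit, hsplit]
    have htail : ∑ m ∈ (Finset.univ.erase i).erase j, ‖(β - θ') m‖^2
        = ∑ m ∈ (Finset.univ.erase i).erase j, ‖(β - θ) m‖^2 := by
      apply Finset.sum_congr rfl
      intro m hm
      rw [Finset.mem_erase, Finset.mem_erase] at hm
      rw [hsub, hsub, hθ'm m hm.2.1 hm.1]
    rw [htail]
    have key : ‖(β - θ') j‖^2 + ‖(β - θ') i‖^2 < ‖(β - θ) j‖^2 + ‖(β - θ) i‖^2 := by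
      rw [hsub, hsub, hsub, hsub, hθ'i, hθ'j, hθj]
      have habs : β i * θ i ≤ |β i| * |θ i| := by
        rw [← abs_mul]; exact le_abs_self _
      have hlt2 : |β i| * |θ i| < |β j| * |θ i| :=
        mul_lt_mul_of_pos_right hblt (abs_pos.2 hti)
      have hε2' : ε^2 * θ i^2 = θ i^2 := by rw [hε2, one_mul]
      nlinarith [hεm, habs, hlt2, hε2']
    linarith
  have hle : Metric.infDist β S ≤ dist β θ' := Metric.infDist_le_dist_of_mem hθ'S
  rw [dist_eq_norm] at hle
  rw [hθd] at hlt
  linarith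


end
end

section
/- Let 1 ≤ d ≤ k ≤ p and θ ∈ ℝ^p, and let θ̄ be the entries of |θ| sorted in descending order. Then every ω ∈ Π(θ; S_{k,d}) satisfies ‖ω‖₂² = max over all partitions of {1,…,k} into d nonempty blocks I₁,…,I_d of consecutive integers of Σ_{i=1}^d (Σ_{j∈Iᵢ} θ̄ⱼ)² / |Iᵢ|. -/
open Metric Set

noncomputable section

/-- The set `S_{k,d}` of vectors with at most `k` nonzero entries whose `k` largest
absolute values take at most `d` distinct values. -/
def Skd (p k d : ℕ) : Set (E p) :=
  {β | (Finset.univ.filter fun i => β i ≠ 0).card ≤ k ∧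
    ((Finset.range k).image fun i => (sortedAbs β).getD i 0).card ≤ d}

/-- The value `Σ_{t<d} (Σ_{j ∈ Iₜ} θ̄ⱼ)² / |Iₜ|` of a consecutive partition of
`{0, …, k−1}` given by boundaries `b 0 = 0 < b 1 < … < b d = k`. -/
def partitionVal {p : ℕ} (θ : E p) (d : ℕ) (b : ℕ → ℕ) : ℝ :=
  ∑ t ∈ Finset.range d,
    (∑ j ∈ Finset.Ico (b t) (b (t + 1)), (sortedAbs θ).getD j 0) ^ 2 /
      ((b (t + 1) : ℝ) - (b t : ℝ))

namespace Skdwork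

variable {p : ℕ}


variable {p : ℕ}

def sv (θ : E p) (j : ℕ) : ℝ := (sortedAbs θ).getD j 0

lemma length_sortedAbs (θ : E p) : (sortedAbs θ).length = p := by
  simp [sortedAbs]

lemma sortedAbs_sorted (θ : E p) : (sortedAbs θ).Pairwise (· ≥ ·) :=
  List.pairwise_insertionSort _ _

lemma sortedAbs_perm (θ : E p) : (sortedAbs θ).Perm (List.ofFn fun i => |θ i|) :=
  List.perm_insertionSort _ _

lemma sv_of_ge (θ : E p) {j : ℕ} (hj : p ≤ j) : sv θ j = 0 := by
  rw [sv, List.getD_eq_default]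
  rw [length_sortedAbs]; exact hj

lemma exists_sortPerm (θ : E p) :
    ∃ e : Equiv.Perm (Fin p), ∀ j : Fin p, sv θ (j : ℕ) = |θ (e j)| := by
  classical
  set f : Fin p → ℝ := fun i => -|θ i| with hf
  refine ⟨Tuple.sort f, ?_⟩
  have hm : Monotone (f ∘ Tuple.sort f) := Tuple.monotone_sort f
  have hsorted : (List.ofFn fun j => |θ (Tuple.sort f j)|).Pairwise (· ≥ ·) := by
    rw [List.pairwise_ofFn]
    intro i j hij
    have := hm hij.le
    simp only [hf, Function.comp_apply, neg_le_neg_iff] at this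
    exact this
  have hperm : (List.ofFn fun j => |θ (Tuple.sort f j)|).Perm (List.ofFn fun i => |θ i|) :=
    (Tuple.sort f).ofFn_comp_perm (fun i => |θ i|)
  have heq : sortedAbs θ = List.ofFn fun j => |θ (Tuple.sort f j)| :=
    List.Perm.eq_of_pairwise (fun a b _ _ h1 h2 => le_antisymm h2 h1) (sortedAbs_sorted θ) hsorted ((sortedAbs_perm θ).trans hperm.symm)
  intro j
  have hj : (j : ℕ) < (sortedAbs θ).length := by rw [length_sortedAbs]; exact j.isLt
  rw [sv, List.getD_eq_getElem _ _ hj]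
  simp [heq]

lemma sv_nonneg (θ : E p) (j : ℕ) : 0 ≤ sv θ j := by
  rcases lt_or_ge j p with hj | hj
  · obtain ⟨e, he⟩ := exists_sortPerm θ
    have := he ⟨j, hj⟩
    simp only [Fin.val_mk] at this  -- ?
    rw [this]; exact abs_nonneg _
  · rw [sv_of_ge θ hj]

lemma sv_antitone (θ : E p) {i j : ℕ} (hij : i ≤ j) : sv θ j ≤ sv θ i := by
  rcases lt_or_ge j p with hj | hj
  · have hi : i < p := lt_of_le_of_lt hij hj
    rcases eq_or_lt_of_le hij with rfl | hlt
    · exact le_refl _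
    · have hs := sortedAbs_sorted θ
      have hi' : i < (sortedAbs θ).length := by rw [length_sortedAbs]; exact hi
      have hj' : j < (sortedAbs θ).length := by rw [length_sortedAbs]; exact hj
      have := List.pairwise_iff_get.mp hs ⟨i, hi'⟩ ⟨j, hj'⟩ hlt
      rw [sv, sv, List.getD_eq_getElem _ _ hi', List.getD_eq_getElem _ _ hj']
      exact this
  · rw [sv_of_ge θ hj]; exact sv_nonneg θ i

lemma sum_sv (θ : E p) (F : ℝ → ℝ) :
    ∑ j ∈ Finset.range p, F (sv θ j) = ∑ i : Fin p, F (|θ i|) := by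
  obtain ⟨e, he⟩ := exists_sortPerm θ
  rw [← Fin.sum_univ_eq_sum_range (fun j => F (sv θ j))]
  rw [← Equiv.sum_comp e (fun i => F (|θ i|))]
  exact Finset.sum_congr rfl fun j _ => by rw [he j]



lemma b_mono {b : ℕ → ℕ} {d : ℕ} (h : ∀ t < d, b t ≤ b (t + 1)) :
    ∀ s t, s ≤ t → t ≤ d → b s ≤ b t := by
  intro s t hst htd
  induction t with
  | zero => simp_all
  | succ n ih =>
    rcases Nat.lt_or_ge s (n+1) with hlt | hge
    · have := ih (Nat.lt_succ_iff.mp hlt) (le_trans (Nat.le_succ n) htd)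
      exact le_trans this (h n (lt_of_lt_of_le (Nat.lt_succ_self n) htd))
    · have : s = n + 1 := le_antisymm hst hge
      subst this; exact le_refl _

lemma sum_blocks {b : ℕ → ℕ} {d : ℕ} (h : ∀ t < d, b t ≤ b (t + 1)) (F : ℕ → ℝ) :
    ∑ t ∈ Finset.range d, ∑ j ∈ Finset.Ico (b t) (b (t + 1)), F j
      = ∑ j ∈ Finset.Ico (b 0) (b d), F j := by
  induction d with
  | zero => simp
  | succ n ih =>
    have h' : ∀ t < n, b t ≤ b (t + 1) := fun t ht => h t (lt_trans ht (Nat.lt_succ_self n))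
    rw [Finset.sum_range_succ, ih h']
    exact Finset.sum_Ico_consecutive _ (b_mono h 0 n (Nat.zero_le n) (Nat.le_succ n))
      (h n (Nat.lt_succ_self n))

lemma mem_block {b : ℕ → ℕ} {d : ℕ} (hs : ∀ t < d, b t < b (t + 1)) :
    ∀ j, b 0 ≤ j → j < b d → ∃ t < d, b t ≤ j ∧ j < b (t + 1) := by
  induction d with
  | zero => intro j h1 h2; omega
  | succ n ih =>
    intro j h1 h2
    rcases Nat.lt_or_ge j (b n) with hlt | hge
    · obtain ⟨t, ht, h3, h4⟩ := ih (fun t ht => hs t (lt_trans ht (Nat.lt_succ_self n))) j h1 hlt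
      exact ⟨t, lt_trans ht (Nat.lt_succ_self n), h3, h4⟩
    · exact ⟨n, Nat.lt_succ_self n, hge, h2⟩

open Finset in
/-- Construction of a `d`-block consecutive partition on which an antitone function
taking at most `d` values on `[0,k)` is constant on each block. -/
lemma exists_blocks (u : ℕ → ℝ) (hu : ∀ i j, i ≤ j → u j ≤ u i) :
    ∀ d, 1 ≤ d → ∀ k, d ≤ k → ((Finset.range k).image u).card ≤ d →
    ∃ b : ℕ → ℕ, b 0 = 0 ∧ b d = k ∧ (∀ t < d, b t < b (t + 1)) ∧
      (∀ t < d, ∀ j, b t ≤ j → j < b (t + 1) → u j = u (b t)) := by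
  classical
  intro d
  induction d with
  | zero => omega
  | succ n ih =>
    intro _ k hdk hcard
    rcases Nat.eq_zero_or_pos n with rfl | hn
    · -- base case: one block
      refine ⟨fun t => if t = 0 then 0 else k, by simp, by simp, ?_, ?_⟩
      · intro t ht
        interval_cases t
        simp; omega
      · intro t ht j h1 h2
        interval_cases t
        simp only [if_pos rfl] at h1 h2 ⊢
        have hmem : ∀ x < k, u x ∈ (Finset.range k).image u := by
          intro x hx; exact Finset.mem_image_of_mem u (Finset.mem_range.mpr hx)
        have h2' : j < k := by simpa using h2
        exact Finset.card_le_one.mp hcard _ (hmem j h2') _ (hmem 0 (by omega))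
    · -- inductive step, n ≥ 1, k ≥ n+1
      have hex : ∃ j, u j = u (k - 1) := ⟨k - 1, rfl⟩
      set c := Nat.find hex with hc
      have hcspec : u c = u (k - 1) := Nat.find_spec hex
      have hcmin : ∀ j < c, u j ≠ u (k - 1) := fun j hj => Nat.find_min hex hj
      have hck : c ≤ k - 1 := Nat.find_le rfl
      have hrun : ∀ j, c ≤ j → j < k → u j = u (k - 1) := by
        intro j h1 h2
        have hub : u j ≤ u c := hu c j h1
        have hlb : u (k - 1) ≤ u j := hu j (k - 1) (by omega)
        rw [hcspec] at hub; exact le_antisymm hub hlb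
      have hukmem : u (k - 1) ∈ (Finset.range k).image u :=
        Finset.mem_image_of_mem u (Finset.mem_range.mpr (by omega))
      rcases Nat.lt_or_ge c n with hcB | hcA
      · -- Case B: c < n; cut singleton {k-1}, total distinct values ≤ n
        have hsub : (Finset.range k).image u ⊆ insert (u (k - 1)) ((Finset.range c).image u) := by
          intro x hx
          obtain ⟨j, hj, rfl⟩ := Finset.mem_image.mp hx
          rw [Finset.mem_range] at hj
          rcases Nat.lt_or_ge j c with h | h
          · exact Finset.mem_insert_of_mem (Finset.mem_image_of_mem u (Finset.mem_range.mpr h))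
          · exact Finset.mem_insert.mpr (Or.inl (hrun j h hj))
        have hcard2 : ((Finset.range (k - 1)).image u).card ≤ n := by
          calc ((Finset.range (k - 1)).image u).card
              ≤ ((Finset.range k).image u).card :=
                Finset.card_le_card (Finset.image_subset_image (by
                  exact Finset.range_subset_range.mpr (by omega)))
            _ ≤ (insert (u (k - 1)) ((Finset.range c).image u)).card :=
                Finset.card_le_card hsub
            _ ≤ ((Finset.range c).image u).card + 1 := Finset.card_insert_le _ _
            _ ≤ c + 1 := by
                have := Finset.card_image_le (s := Finset.range c) (f := u)
                simp at this; omega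
            _ ≤ n := by omega
        obtain ⟨b', hb0, hbn, hbs, hbc⟩ := ih hn (k - 1) (by omega) hcard2
        refine ⟨fun t => if t ≤ n then b' t else k, by simp [hb0], by simp, ?_, ?_⟩
        · intro t ht
          rcases Nat.lt_or_ge t n with h | h
          · simp only [if_pos (le_of_lt h), if_pos (Nat.succ_le_of_lt h)]
            exact hbs t h
          · have htn : t = n := by omega
            dsimp only
            rw [if_pos (by omega : t ≤ n), if_neg (by omega : ¬ t + 1 ≤ n), htn, hbn]
            omega
        · intro t ht j h1 h2
          rcases Nat.lt_or_ge t n with h | h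
          · simp only [if_pos (le_of_lt h), if_pos (Nat.succ_le_of_lt h)] at h1 h2 ⊢
            exact hbc t h j h1 h2
          · have htn : t = n := by omega
            dsimp only at h1 h2 ⊢
            rw [if_pos (by omega : t ≤ n)] at h1
            rw [if_neg (by omega : ¬ t + 1 ≤ n)] at h2
            rw [if_pos (by omega : t ≤ n), htn, hbn]
            rw [htn, hbn] at h1
            have : j = k - 1 := by omega
            rw [this]
      · -- Case A: c ≥ n; last block is the constant run [c, k)
        have hcard2 : ((Finset.range c).image u).card ≤ n := by
          have hsub : (Finset.range c).image u ⊆ ((Finset.range k).image u).erase (u (k - 1)) := by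
            intro x hx
            obtain ⟨j, hj, rfl⟩ := Finset.mem_image.mp hx
            rw [Finset.mem_range] at hj
            refine Finset.mem_erase.mpr ⟨hcmin j hj, Finset.mem_image_of_mem u ?_⟩
            exact Finset.mem_range.mpr (by omega)
          calc ((Finset.range c).image u).card
              ≤ (((Finset.range k).image u).erase (u (k - 1))).card := Finset.card_le_card hsub
            _ = ((Finset.range k).image u).card - 1 := Finset.card_erase_of_mem hukmem
            _ ≤ n := by omega
        obtain ⟨b', hb0, hbn, hbs, hbc⟩ := ih hn c hcA hcard2
        refine ⟨fun t => if t ≤ n then b' t else k, by simp [hb0], by simp, ?_, ?_⟩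
        · intro t ht
          rcases Nat.lt_or_ge t n with h | h
          · simp only [if_pos (le_of_lt h), if_pos (Nat.succ_le_of_lt h)]
            exact hbs t h
          · have htn : t = n := by omega
            dsimp only
            rw [if_pos (by omega : t ≤ n), if_neg (by omega : ¬ t + 1 ≤ n), htn, hbn]
            omega
        · intro t ht j h1 h2
          rcases Nat.lt_or_ge t n with h | h
          · simp only [if_pos (le_of_lt h), if_pos (Nat.succ_le_of_lt h)] at h1 h2 ⊢
            exact hbc t h j h1 h2
          · have htn : t = n := by omega
            dsimp only at h1 h2 ⊢
            rw [if_pos (by omega : t ≤ n)] at h1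
            rw [if_neg (by omega : ¬ t + 1 ≤ n)] at h2
            rw [if_pos (by omega : t ≤ n), htn, hbn]
            rw [htn, hbn] at h1
            rw [hrun j h1 h2, hrun c (le_refl c) (by omega)]



lemma norm_sq_eq (x : E p) : ‖x‖ ^ 2 = ∑ i : Fin p, (x i) ^ 2 := by
  rw [EuclideanSpace.norm_eq, Real.sq_sqrt]
  · exact Finset.sum_congr rfl fun i _ => by rw [Real.norm_eq_abs, sq_abs]
  · exact Finset.sum_nonneg fun i _ => sq_nonneg _

section Construction

variable (θ : E p) (k d : ℕ) (b : ℕ → ℕ)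
variable (h0 : b 0 = 0) (hbd : b d = k) (hstrict : ∀ t < d, b t < b (t + 1)) (hkp : k ≤ p)

def Sblk (t : ℕ) : ℝ := ∑ j ∈ Finset.Ico (b t) (b (t + 1)), sv θ j

def mval (t : ℕ) : ℝ := Sblk θ b t / ((b (t + 1) : ℝ) - (b t : ℝ))

def mfun (j : ℕ) : ℝ :=
  ∑ t ∈ Finset.range d, if b t ≤ j ∧ j < b (t + 1) then mval θ b t else 0

variable {θ k d b}

lemma bmono' (hstrict : ∀ t < d, b t < b (t + 1)) (s t : ℕ) (hst : s ≤ t) (htd : t ≤ d) : b s ≤ b t :=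
  b_mono (fun t ht => le_of_lt (hstrict t ht)) s t hst htd

include hstrict in
lemma denom_pos {t : ℕ} (ht : t < d) : (0 : ℝ) < (b (t + 1) : ℝ) - (b t : ℝ) := by
  have := hstrict t ht
  have : (b t : ℝ) < (b (t + 1) : ℝ) := by exact_mod_cast this
  linarith

lemma Sblk_nonneg (t : ℕ) : 0 ≤ Sblk θ b t :=
  Finset.sum_nonneg fun j _ => sv_nonneg θ j

include hstrict in
lemma mval_nonneg {t : ℕ} (ht : t < d) : 0 ≤ mval θ b t :=
  div_nonneg (Sblk_nonneg t) (le_of_lt (denom_pos hstrict ht))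

include hstrict in
lemma mfun_eq_of_block {t0 j : ℕ} (ht0 : t0 < d) (h1 : b t0 ≤ j) (h2 : j < b (t0 + 1)) :
    mfun θ d b j = mval θ b t0 := by
  rw [mfun, Finset.sum_eq_single_of_mem t0 (Finset.mem_range.mpr ht0)]
  · rw [if_pos ⟨h1, h2⟩]
  · intro t ht hne
    rw [Finset.mem_range] at ht
    rw [if_neg]
    rintro ⟨h3, h4⟩
    rcases Nat.lt_or_ge t t0 with h | h
    · have : b (t + 1) ≤ b t0 := bmono' hstrict (t + 1) t0 h (le_of_lt ht0)
      omega
    · have : b (t0 + 1) ≤ b t := bmono' hstrict (t0 + 1) t (by omega) (le_of_lt ht)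
      omega

include h0 hbd hstrict in
lemma mfun_eq_mval_of_lt {j : ℕ} (hj : j < k) :
    ∃ t < d, mfun θ d b j = mval θ b t := by
  obtain ⟨t, ht, h1, h2⟩ := mem_block hstrict j (by omega) (by omega)
  exact ⟨t, ht, mfun_eq_of_block hstrict ht h1 h2⟩

include hbd hstrict in
lemma mfun_zero {j : ℕ} (hj : k ≤ j) : mfun θ d b j = 0 := by
  rw [mfun]
  refine Finset.sum_eq_zero fun t ht => ?_
  rw [Finset.mem_range] at ht
  rw [if_neg]
  rintro ⟨h1, h2⟩
  have : b (t + 1) ≤ b d := bmono' hstrict (t + 1) d (by omega) (le_refl d)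
  omega

include hstrict in
lemma mfun_nonneg (j : ℕ) : 0 ≤ mfun θ d b j := by
  refine Finset.sum_nonneg fun t ht => ?_
  rw [Finset.mem_range] at ht
  split
  · exact mval_nonneg hstrict ht
  · exact le_refl _

include hstrict in
lemma mval_le {t : ℕ} (ht : t < d) : mval θ b t ≤ sv θ (b t) := by
  rw [mval, div_le_iff₀ (denom_pos hstrict ht)]
  have hcast : ((b (t + 1) : ℝ) - (b t : ℝ)) = ((b (t + 1) - b t : ℕ) : ℝ) := by
    have := hstrict t ht
    push_cast [Nat.cast_sub (le_of_lt this)]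
    ring
  rw [hcast, ← Nat.card_Ico (b t) (b (t + 1))]
  rw [Sblk]
  calc ∑ j ∈ Finset.Ico (b t) (b (t + 1)), sv θ j
      ≤ ∑ _j ∈ Finset.Ico (b t) (b (t + 1)), sv θ (b t) := by
        refine Finset.sum_le_sum fun j hj => ?_
        rw [Finset.mem_Ico] at hj
        exact sv_antitone θ hj.1
    _ = (Finset.Ico (b t) (b (t + 1))).card • sv θ (b t) := by rw [Finset.sum_const]
    _ = sv θ (b t) * ((Finset.Ico (b t) (b (t + 1))).card : ℝ) := by
        rw [nsmul_eq_mul]; ring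

include hstrict in
lemma le_mval {t : ℕ} (ht : t < d) : sv θ (b (t + 1) - 1) ≤ mval θ b t := by
  rw [mval, le_div_iff₀ (denom_pos hstrict ht)]
  have hlt := hstrict t ht
  have hcast : ((b (t + 1) : ℝ) - (b t : ℝ)) = ((b (t + 1) - b t : ℕ) : ℝ) := by
    push_cast [Nat.cast_sub (le_of_lt hlt)]
    ring
  rw [hcast, ← Nat.card_Ico (b t) (b (t + 1)), Sblk]
  calc sv θ (b (t + 1) - 1) * ((Finset.Ico (b t) (b (t + 1))).card : ℝ)
      = (Finset.Ico (b t) (b (t + 1))).card • sv θ (b (t + 1) - 1) := by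
        rw [nsmul_eq_mul]; ring
    _ = ∑ _j ∈ Finset.Ico (b t) (b (t + 1)), sv θ (b (t + 1) - 1) := by rw [Finset.sum_const]
    _ ≤ ∑ j ∈ Finset.Ico (b t) (b (t + 1)), sv θ j := by
        refine Finset.sum_le_sum fun j hj => ?_
        rw [Finset.mem_Ico] at hj
        exact sv_antitone θ (by omega)

include h0 hbd hstrict in
lemma mfun_antitone {i j : ℕ} (hij : i ≤ j) : mfun θ d b j ≤ mfun θ d b i := by
  rcases Nat.lt_or_ge j k with hj | hj
  · have hi : i < k := by omega
    obtain ⟨ti, hti, hi1, hi2⟩ := mem_block hstrict i (by omega) (by omega)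
    obtain ⟨tj, htj, hj1, hj2⟩ := mem_block hstrict j (by omega) (by omega)
    rw [mfun_eq_of_block hstrict hti hi1 hi2, mfun_eq_of_block hstrict htj hj1 hj2]
    have htit : ti ≤ tj := by
      by_contra hcon
      push_neg at hcon
      have : b (tj + 1) ≤ b ti := bmono' hstrict (tj + 1) ti (by omega) (le_of_lt hti)
      omega
    rcases eq_or_lt_of_le htit with rfl | hlt
    · exact le_refl _
    · calc mval θ b tj ≤ sv θ (b tj) := mval_le hstrict htj
        _ ≤ sv θ (b (ti + 1) - 1) := by
            refine sv_antitone θ ?_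
            have h1 : b (ti + 1) ≤ b tj := bmono' hstrict (ti + 1) tj hlt (le_of_lt htj)
            have h2 : b ti < b (ti + 1) := hstrict ti hti
            omega
        _ ≤ mval θ b ti := le_mval hstrict hti
  · rw [mfun_zero hbd hstrict hj]
    exact mfun_nonneg hstrict i

end Construction




section Construction2

variable {p : ℕ} (θ : E p) (k d : ℕ) (b : ℕ → ℕ) (e : Equiv.Perm (Fin p))

def bvec : E p := WithLp.toLp 2 (fun i => (if θ i < 0 then (-1 : ℝ) else 1) * mfun θ d b ((e.symm i : ℕ)))

variable {θ k d b e}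
variable (h0 : b 0 = 0) (hbd : b d = k) (hstrict : ∀ t < d, b t < b (t + 1)) (hkp : k ≤ p)

include hstrict in
lemma block_sum_sq {t : ℕ} (ht : t < d) :
    ∑ j ∈ Finset.Ico (b t) (b (t + 1)), (sv θ j - mval θ b t) ^ 2
      = ∑ j ∈ Finset.Ico (b t) (b (t + 1)), (sv θ j) ^ 2
        - (Sblk θ b t) ^ 2 / ((b (t + 1) : ℝ) - (b t : ℝ)) := by
  have hn := denom_pos hstrict ht
  have hcard : ((Finset.Ico (b t) (b (t + 1))).card : ℝ) = (b (t + 1) : ℝ) - (b t : ℝ) := by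
    rw [Nat.card_Ico]
    push_cast [Nat.cast_sub (hstrict t ht).le]
    ring
  have expand : ∑ j ∈ Finset.Ico (b t) (b (t + 1)), (sv θ j - mval θ b t) ^ 2
      = (∑ j ∈ Finset.Ico (b t) (b (t + 1)), (sv θ j) ^ 2)
        - 2 * mval θ b t * Sblk θ b t
        + ((b (t + 1) : ℝ) - (b t : ℝ)) * (mval θ b t) ^ 2 := by
    calc ∑ j ∈ Finset.Ico (b t) (b (t + 1)), (sv θ j - mval θ b t) ^ 2
        = ∑ j ∈ Finset.Ico (b t) (b (t + 1)),
            ((sv θ j) ^ 2 - 2 * mval θ b t * sv θ j + (mval θ b t) ^ 2) := by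
          exact Finset.sum_congr rfl fun j _ => by ring
      _ = (∑ j ∈ Finset.Ico (b t) (b (t + 1)), (sv θ j) ^ 2)
            - 2 * mval θ b t * Sblk θ b t
            + ((b (t + 1) : ℝ) - (b t : ℝ)) * (mval θ b t) ^ 2 := by
          rw [Finset.sum_add_distrib, Finset.sum_sub_distrib, Finset.sum_const, nsmul_eq_mul,
            hcard, Sblk, Finset.mul_sum]
  rw [expand, mval]
  field_simp
  ring

include h0 hbd hstrict in
lemma sum_range_k :
    ∑ j ∈ Finset.range k, (sv θ j - mfun θ d b j) ^ 2
      = ∑ j ∈ Finset.range k, (sv θ j) ^ 2 - partitionVal θ d b := by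
  have hmono : ∀ t < d, b t ≤ b (t + 1) := fun t ht => (hstrict t ht).le
  have hIco : Finset.Ico (b 0) (b d) = Finset.range k := by
    rw [h0, hbd, Finset.range_eq_Ico]
  have h1 : ∑ j ∈ Finset.range k, (sv θ j - mfun θ d b j) ^ 2
      = ∑ t ∈ Finset.range d, ∑ j ∈ Finset.Ico (b t) (b (t + 1)),
          (sv θ j - mfun θ d b j) ^ 2 := by
    rw [sum_blocks hmono, hIco]
  have h2 : ∑ j ∈ Finset.range k, (sv θ j) ^ 2
      = ∑ t ∈ Finset.range d, ∑ j ∈ Finset.Ico (b t) (b (t + 1)), (sv θ j) ^ 2 := by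
    rw [sum_blocks hmono, hIco]
  rw [h1, h2, partitionVal, ← Finset.sum_sub_distrib]
  refine Finset.sum_congr rfl fun t ht => ?_
  rw [Finset.mem_range] at ht
  have hblk : ∑ j ∈ Finset.Ico (b t) (b (t + 1)), (sv θ j - mfun θ d b j) ^ 2
      = ∑ j ∈ Finset.Ico (b t) (b (t + 1)), (sv θ j - mval θ b t) ^ 2 := by
    refine Finset.sum_congr rfl fun j hj => ?_
    rw [Finset.mem_Ico] at hj
    rw [mfun_eq_of_block hstrict ht hj.1 hj.2]
  rw [hblk, block_sum_sq hstrict ht]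
  rfl

variable (he : ∀ j : Fin p, sv θ (j : ℕ) = |θ (e j)|)

include hstrict in
lemma abs_bvec (i : Fin p) : |bvec θ d b e i| = mfun θ d b ((e.symm i : ℕ)) := by
  rw [bvec, PiLp.toLp_apply, abs_mul]
  have h1 : |if θ i < 0 then (-1 : ℝ) else 1| = 1 := by split <;> simp
  rw [h1, one_mul, abs_of_nonneg (mfun_nonneg hstrict _)]

include he in
lemma dist_sq_bvec :
    ∑ i : Fin p, (θ i - bvec θ d b e i) ^ 2
      = ∑ j ∈ Finset.range p, (sv θ j - mfun θ d b j) ^ 2 := by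
  have h1 : ∀ i : Fin p, (θ i - bvec θ d b e i) ^ 2
      = (|θ i| - mfun θ d b ((e.symm i : ℕ))) ^ 2 := by
    intro i
    simp only [bvec, WithLp.ofLp_toLp]
    by_cases h : θ i < 0
    · rw [if_pos h, abs_of_neg h]; ring
    · rw [if_neg h, abs_of_nonneg (not_lt.mp h)]; ring
  rw [Finset.sum_congr rfl fun i _ => h1 i]
  rw [← Equiv.sum_comp e (fun i => (|θ i| - mfun θ d b ((e.symm i : ℕ))) ^ 2)]
  simp only [Equiv.symm_apply_apply]
  rw [← Fin.sum_univ_eq_sum_range]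
  exact Finset.sum_congr rfl fun j _ => by rw [he j]

end Construction2




section Construction3

variable {p : ℕ} {θ : E p} {k d : ℕ} {b : ℕ → ℕ} {e : Equiv.Perm (Fin p)}
variable (h0 : b 0 = 0) (hbd : b d = k) (hstrict : ∀ t < d, b t < b (t + 1)) (hkp : k ≤ p)
variable (he : ∀ j : Fin p, sv θ (j : ℕ) = |θ (e j)|)

include h0 hbd hstrict hkp he in
lemma dist_sq_bvec_total :
    ∑ i : Fin p, (θ i - bvec θ d b e i) ^ 2
      = (∑ i : Fin p, |θ i| ^ 2) - partitionVal θ d b := by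
  rw [dist_sq_bvec he]
  have hsplit : ∑ j ∈ Finset.range p, (sv θ j - mfun θ d b j) ^ 2
      = (∑ j ∈ Finset.Ico 0 k, (sv θ j - mfun θ d b j) ^ 2)
        + ∑ j ∈ Finset.Ico k p, (sv θ j - mfun θ d b j) ^ 2 := by
    rw [Finset.sum_Ico_consecutive _ (Nat.zero_le k) hkp, Finset.range_eq_Ico]
  have htail : ∑ j ∈ Finset.Ico k p, (sv θ j - mfun θ d b j) ^ 2
      = ∑ j ∈ Finset.Ico k p, (sv θ j) ^ 2 := by
    refine Finset.sum_congr rfl fun j hj => ?_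
    rw [Finset.mem_Ico] at hj
    rw [mfun_zero hbd hstrict hj.1, sub_zero]
  have hsv : ∑ j ∈ Finset.range p, (sv θ j) ^ 2
      = (∑ j ∈ Finset.Ico 0 k, (sv θ j) ^ 2) + ∑ j ∈ Finset.Ico k p, (sv θ j) ^ 2 := by
    rw [Finset.sum_Ico_consecutive _ (Nat.zero_le k) hkp, Finset.range_eq_Ico]
  have hall : ∑ j ∈ Finset.range p, (sv θ j) ^ 2 = ∑ i : Fin p, |θ i| ^ 2 :=
    sum_sv θ (fun x => x ^ 2)
  rw [hsplit, htail, ← Finset.range_eq_Ico, sum_range_k h0 hbd hstrict]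
  rw [← hall, hsv, ← Finset.range_eq_Ico]
  ring

include h0 hbd hstrict hkp he in
lemma bvec_mem : bvec θ d b e ∈ Skd p k d := by
  classical
  constructor
  · -- at most k nonzero entries
    have hrange : ∀ m ∈ Finset.range k, m < p := fun m hm =>
      lt_of_lt_of_le (Finset.mem_range.mp hm) hkp
    refine le_trans (Finset.card_le_card_of_injOn (t := (Finset.range k).attachFin hrange)
      (fun i => e.symm i) (fun i hi => ?_) (e.symm.injective.injOn)) ?_
    · rw [Finset.mem_coe, Finset.mem_filter] at hi
      refine Finset.mem_attachFin hrange |>.mpr ?_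
      rw [Finset.mem_range]
      by_contra hcon
      push_neg at hcon
      have hz := mfun_zero (θ := θ) hbd hstrict hcon
      have habs := abs_bvec hstrict (θ := θ) (e := e) i
      rw [hz, abs_eq_zero] at habs
      exact hi.2 habs
    · rw [Finset.card_attachFin, Finset.card_range]
  · -- sorted abs values take at most d values among top k
    have hsorted_eq : sortedAbs (bvec θ d b e) = List.ofFn (fun j : Fin p => mfun θ d b (j : ℕ)) := by
    -- perm + sorted
      have hfn : (fun i : Fin p => |bvec θ d b e i|)
          = (fun j : Fin p => mfun θ d b (j : ℕ)) ∘ e.symm := by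
        funext i
        exact abs_bvec hstrict i
      have hperm : (List.ofFn fun i : Fin p => |bvec θ d b e i|).Perm
          (List.ofFn fun j : Fin p => mfun θ d b (j : ℕ)) := by
        rw [hfn]
        exact Equiv.Perm.ofFn_comp_perm e.symm _
      have hsorted : (List.ofFn fun j : Fin p => mfun θ d b (j : ℕ)).Pairwise (· ≥ ·) := by
        rw [List.pairwise_ofFn]
        intro i j hij
        exact mfun_antitone h0 hbd hstrict (le_of_lt hij)
      exact List.Perm.eq_of_pairwise (fun a b _ _ h1 h2 => le_antisymm h2 h1)
        (List.pairwise_insertionSort _ _) hsorted ((List.perm_insertionSort _ _).trans hperm)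
    have hgetD : ∀ i < k, (sortedAbs (bvec θ d b e)).getD i 0 = mfun θ d b i := by
      intro i hi
      have hlen : i < (sortedAbs (bvec θ d b e)).length := by
        rw [hsorted_eq, List.length_ofFn]; omega
      rw [List.getD_eq_getElem _ _ hlen]
      simp [hsorted_eq]
    calc ((Finset.range k).image fun i => (sortedAbs (bvec θ d b e)).getD i 0).card
        ≤ ((Finset.range d).image (mval θ b)).card := by
          refine Finset.card_le_card fun x hx => ?_
          obtain ⟨i, hi, rfl⟩ := Finset.mem_image.mp hx
          rw [Finset.mem_range] at hi
          rw [hgetD i hi]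
          obtain ⟨t, ht, hmt⟩ := mfun_eq_mval_of_lt h0 hbd hstrict hi
          rw [hmt]
          exact Finset.mem_image_of_mem _ (Finset.mem_range.mpr ht)
      _ ≤ d := le_trans (Finset.card_image_le) (by rw [Finset.card_range])

end Construction3




section Key

variable {p k d : ℕ}

lemma sq_ineq (S u n : ℝ) (hn : 0 < n) : 2 * u * S - n * u ^ 2 ≤ S ^ 2 / n := by
  rw [le_div_iff₀ hn]
  nlinarith [sq_nonneg (S - n * u)]

lemma sv_zero_of_card_le {ω : E p} (hω : (Finset.univ.filter fun i => ω i ≠ 0).card ≤ k)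
    {j : ℕ} (hj : k ≤ j) : sv ω j = 0 := by
  classical
  rcases le_or_gt p j with hpj | hjp
  · exact sv_of_ge ω hpj
  · -- k ≤ j < p
    by_contra hne
    have hpos : 0 < sv ω j := lt_of_le_of_ne (sv_nonneg ω j) (Ne.symm hne)
    obtain ⟨e', he'⟩ := exists_sortPerm ω
    have hrange : ∀ m ∈ Finset.range (j + 1), m < p := fun m hm => by
      rw [Finset.mem_range] at hm; omega
    have hsub : ∀ a ∈ (Finset.range (j + 1)).attachFin hrange,
        e' a ∈ Finset.univ.filter fun i => ω i ≠ 0 := by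
      intro a ha
      rw [Finset.mem_attachFin] at ha
      rw [Finset.mem_range] at ha
      rw [Finset.mem_filter]
      refine ⟨Finset.mem_univ _, ?_⟩
      have h1 : sv ω (a : ℕ) ≥ sv ω j := sv_antitone ω (by omega)
      have h2 : 0 < |ω (e' a)| := by rw [← he' a]; linarith
      intro hzero
      rw [hzero] at h2
      simp at h2
    have hcard := Finset.card_le_card_of_injOn (fun a => e' a) hsub
      (e'.injective.injOn)
    rw [Finset.card_attachFin, Finset.card_range] at hcard
    omega

/-- Key inequality: for any `ω ∈ Skd` there is an admissible partition `b` with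
`2⟨θ,ω⟩ - ‖ω‖² ≤ partitionVal θ d b`. -/
lemma key_ineq (hd1 : 1 ≤ d) (hdk : d ≤ k) (hkp : k ≤ p) (θ : E p) {ω : E p}
    (hω : ω ∈ Skd p k d) :
    ∃ b : ℕ → ℕ, b 0 = 0 ∧ b d = k ∧ (∀ t < d, b t < b (t + 1)) ∧
      2 * (∑ i : Fin p, θ i * ω i) - (∑ i : Fin p, (ω i) ^ 2) ≤ partitionVal θ d b := by
  classical
  obtain ⟨hω1, hω2⟩ := hω
  have hcard2 : ((Finset.range k).image (sv ω)).card ≤ d := hω2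
  obtain ⟨b, h0, hbd, hstrict, hconst⟩ :=
    exists_blocks (sv ω) (fun i j hij => sv_antitone ω hij) d hd1 k hdk hcard2
  refine ⟨b, h0, hbd, hstrict, ?_⟩
  obtain ⟨e, he⟩ := exists_sortPerm θ
  obtain ⟨e', he'⟩ := exists_sortPerm ω
  set T := ∑ i : Fin p, θ i * ω i with hT
  set W := ∑ i : Fin p, (ω i) ^ 2 with hWdef
  -- Step 1: T ≤ ∑ j < k, sv θ j * sv ω j
  have step1 : T ≤ ∑ j ∈ Finset.range k, sv θ j * sv ω j := by
    have hσ : T ≤ ∑ i : Fin p, |θ i| * |ω i| := by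
      refine Finset.sum_le_sum fun i _ => ?_
      calc θ i * ω i ≤ |θ i * ω i| := le_abs_self _
        _ = |θ i| * |ω i| := abs_mul _ _
    have hreindex : ∑ i : Fin p, |θ i| * |ω i|
        = ∑ j : Fin p, (fun j : Fin p => sv θ (j : ℕ)) j
            * (fun j : Fin p => sv ω (j : ℕ)) ((e.trans e'.symm) j) := by
      rw [← Equiv.sum_comp e (fun i => |θ i| * |ω i|)]
      refine Finset.sum_congr rfl fun j _ => ?_
      simp only [Equiv.trans_apply]
      rw [he j, he' (e'.symm (e j)), Equiv.apply_symm_apply]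
    have hmv : Monovary (fun j : Fin p => sv θ (j : ℕ)) (fun j : Fin p => sv ω (j : ℕ)) := by
      refine Antitone.monovary ?_ ?_ <;> exact fun a b hab => sv_antitone _ hab
    have hrearr := hmv.sum_mul_comp_perm_le_sum_mul (σ := e.trans e'.symm)
    have htrunc : ∑ j : Fin p, sv θ (j : ℕ) * sv ω (j : ℕ)
        = ∑ j ∈ Finset.range k, sv θ j * sv ω j := by
      rw [Fin.sum_univ_eq_sum_range (fun j => sv θ j * sv ω j)]
      rw [Finset.range_eq_Ico, ← Finset.sum_Ico_consecutive _ (Nat.zero_le k) hkp]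
      have : ∑ j ∈ Finset.Ico k p, sv θ j * sv ω j = 0 := by
        refine Finset.sum_eq_zero fun j hj => ?_
        rw [Finset.mem_Ico] at hj
        rw [sv_zero_of_card_le hω1 hj.1, mul_zero]
      rw [this, add_zero, Finset.range_eq_Ico]
    calc T ≤ ∑ i : Fin p, |θ i| * |ω i| := hσ
      _ = _ := hreindex
      _ ≤ ∑ j : Fin p, sv θ (j : ℕ) * sv ω (j : ℕ) := hrearr
      _ = ∑ j ∈ Finset.range k, sv θ j * sv ω j := htrunc
  -- Step 2: block decompositions
  have hmono : ∀ t < d, b t ≤ b (t + 1) := fun t ht => (hstrict t ht).le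
  have hIco : Finset.Ico (b 0) (b d) = Finset.range k := by
    rw [h0, hbd, Finset.range_eq_Ico]
  have step2 : ∑ j ∈ Finset.range k, sv θ j * sv ω j
      = ∑ t ∈ Finset.range d, sv ω (b t) * Sblk θ b t := by
    rw [← hIco, ← sum_blocks hmono]
    refine Finset.sum_congr rfl fun t ht => ?_
    rw [Finset.mem_range] at ht
    rw [Sblk, Finset.mul_sum]
    refine Finset.sum_congr rfl fun j hj => ?_
    rw [Finset.mem_Ico] at hj
    rw [hconst t ht j hj.1 hj.2]
    ring
  have step3 : W = ∑ t ∈ Finset.range d,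
      ((b (t + 1) : ℝ) - (b t : ℝ)) * (sv ω (b t)) ^ 2 := by
    have hWsum : W = ∑ j ∈ Finset.range p, (sv ω j) ^ 2 := by
      have h' : ∑ j ∈ Finset.range p, (sv ω j) ^ 2 = ∑ i : Fin p, |ω i| ^ 2 :=
        sum_sv ω (fun x => x ^ 2)
      rw [hWdef, h']
      exact Finset.sum_congr rfl fun i _ => (sq_abs _).symm
    have hWk : W = ∑ j ∈ Finset.range k, (sv ω j) ^ 2 := by
      rw [hWsum, Finset.range_eq_Ico, ← Finset.sum_Ico_consecutive _ (Nat.zero_le k) hkp]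
      have : ∑ j ∈ Finset.Ico k p, (sv ω j) ^ 2 = 0 := by
        refine Finset.sum_eq_zero fun j hj => ?_
        rw [Finset.mem_Ico] at hj
        rw [sv_zero_of_card_le hω1 hj.1]
        ring
      rw [this, add_zero, Finset.range_eq_Ico]
    rw [hWk, ← hIco, ← sum_blocks hmono]
    refine Finset.sum_congr rfl fun t ht => ?_
    rw [Finset.mem_range] at ht
    have hcardI : ((Finset.Ico (b t) (b (t + 1))).card : ℝ) = (b (t + 1) : ℝ) - (b t : ℝ) := by
      rw [Nat.card_Ico]
      push_cast [Nat.cast_sub (hstrict t ht).le]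
      ring
    have : ∑ j ∈ Finset.Ico (b t) (b (t + 1)), (sv ω j) ^ 2
        = ∑ _j ∈ Finset.Ico (b t) (b (t + 1)), (sv ω (b t)) ^ 2 := by
      refine Finset.sum_congr rfl fun j hj => ?_
      rw [Finset.mem_Ico] at hj
      rw [hconst t ht j hj.1 hj.2]
    rw [this, Finset.sum_const, nsmul_eq_mul, hcardI]
  -- Step 3: conclude termwise
  have final : 2 * T - W ≤ partitionVal θ d b := by
    have h1 : 2 * T - W ≤ ∑ t ∈ Finset.range d,
        (2 * sv ω (b t) * Sblk θ b t
          - ((b (t + 1) : ℝ) - (b t : ℝ)) * (sv ω (b t)) ^ 2) := by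
      rw [Finset.sum_sub_distrib]
      have e1 : ∑ t ∈ Finset.range d, 2 * sv ω (b t) * Sblk θ b t
          = 2 * ∑ t ∈ Finset.range d, sv ω (b t) * Sblk θ b t := by
        rw [Finset.mul_sum]
        exact Finset.sum_congr rfl fun t _ => by ring
      rw [e1, ← step2, ← step3]
      have := step1
      linarith
    refine le_trans h1 ?_
    rw [partitionVal]
    refine Finset.sum_le_sum fun t ht => ?_
    rw [Finset.mem_range] at ht
    exact sq_ineq _ _ _ (denom_pos hstrict ht)
  exact final

end Key




section Cone

variable {p k d : ℕ}

lemma smul_mem_Skd {ω : E p} (hω : ω ∈ Skd p k d) (hkp : k ≤ p) (c : ℝ) :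
    c • ω ∈ Skd p k d := by
  classical
  obtain ⟨h1, h2⟩ := hω
  have happ : ∀ i, (c • ω) i = c * ω i := fun i => rfl
  constructor
  · refine le_trans (Finset.card_le_card fun i hi => ?_) h1
    rw [Finset.mem_filter] at hi ⊢
    refine ⟨Finset.mem_univ _, fun hz => hi.2 ?_⟩
    rw [happ, hz, mul_zero]
  · have hmap : sortedAbs (c • ω) = List.map (fun x => |c| * x) (sortedAbs ω) := by
      have hofn : (List.ofFn fun i => |(c • ω) i|)
          = List.map (fun x => |c| * x) (List.ofFn fun i => |ω i|) := by
        rw [List.map_ofFn]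
        refine congrArg _ (funext fun i => ?_)
        simp only [Function.comp_apply, happ, abs_mul]
      have hperm : (sortedAbs (c • ω)).Perm (List.map (fun x => |c| * x) (sortedAbs ω)) := by
        refine (List.perm_insertionSort _ _).trans ?_
        rw [hofn]
        exact (List.perm_insertionSort _ _).symm.map _
      have hsorted : (List.map (fun x => |c| * x) (sortedAbs ω)).Pairwise (· ≥ ·) := by
        refine List.Pairwise.map _ ?_ (List.pairwise_insertionSort _ _)
        intro a b hab
        exact mul_le_mul_of_nonneg_left hab (abs_nonneg c)
      exact List.Perm.eq_of_pairwise (fun a b _ _ h1 h2 => le_antisymm h2 h1) (List.pairwise_insertionSort _ _) hsorted hperm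
    have hlen : (sortedAbs ω).length = p := by simp [sortedAbs]
    have hgetD : ∀ i < k, (sortedAbs (c • ω)).getD i 0 = |c| * (sortedAbs ω).getD i 0 := by
      intro i hi
      have hip : i < p := lt_of_lt_of_le hi hkp
      have hl1 : i < (sortedAbs (c • ω)).length := by
        rw [hmap, List.length_map, hlen]; exact hip
      have hl2 : i < (sortedAbs ω).length := by rw [hlen]; exact hip
      rw [List.getD_eq_getElem _ _ hl1, List.getD_eq_getElem _ _ hl2]
      simp [hmap]
    have himg : ((Finset.range k).image fun i => (sortedAbs (c • ω)).getD i 0)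
        = ((Finset.range k).image fun i => (sortedAbs ω).getD i 0).image
            (fun x => |c| * x) := by
      rw [Finset.image_image]
      refine Finset.image_congr fun i hi => ?_
      rw [Finset.mem_coe, Finset.mem_range] at hi
      exact hgetD i hi
    rw [himg]
    exact le_trans Finset.card_image_le h2

end Cone


end Skdwork

/-- the squared Euclidean length of any projection of `θ` onto `S_{k,d}`
is the maximum, over all partitions of `{1,…,k}` into `d` nonempty blocks of
consecutive integers, of `Σᵢ (Σ_{j∈Iᵢ} θ̄ⱼ)²/|Iᵢ|`. -/
theorem norm_sq_proj_Skd (p k d : ℕ) (hd1 : 1 ≤ d) (hdk : d ≤ k) (hkp : k ≤ p)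
    (θ : E p) :
    ∀ ω ∈ projSet (Skd p k d) θ,
      IsGreatest
        {v : ℝ | ∃ b : ℕ → ℕ, b 0 = 0 ∧ b d = k ∧ (∀ t < d, b t < b (t + 1)) ∧
          v = partitionVal θ d b}
        (‖ω‖ ^ 2) := by
  classical
  open Skdwork in
  intro ω hω
  obtain ⟨hmem, hdist⟩ := hω
  set T := ∑ i : Fin p, θ i * ω i with hT
  set W := ∑ i : Fin p, (ω i) ^ 2 with hW
  have hWnn : 0 ≤ W := Finset.sum_nonneg fun i _ => sq_nonneg _
  have hnorm : ‖ω‖ ^ 2 = W := by rw [norm_sq_eq ω, hW]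
  have hsub : ∀ x : E p, ‖θ - x‖ ^ 2 = ∑ i : Fin p, (θ i - x i) ^ 2 := by
    intro x
    rw [norm_sq_eq]
    exact Finset.sum_congr rfl fun i _ => rfl
  have hle2 : ∀ β ∈ Skd p k d, ‖θ - ω‖ ^ 2 ≤ ‖θ - β‖ ^ 2 := by
    intro β hβ
    have h1 : ‖θ - ω‖ ≤ ‖θ - β‖ := by
      rw [hdist, ← dist_eq_norm]
      exact Metric.infDist_le_dist_of_mem hβ
    exact pow_le_pow_left₀ (norm_nonneg _) h1 2
  have hexpω : ∑ i : Fin p, (θ i - ω i) ^ 2 = (∑ i : Fin p, (θ i) ^ 2) - 2 * T + W := by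
    have hpt : ∀ i : Fin p, (θ i - ω i) ^ 2
        = (θ i) ^ 2 - 2 * (θ i * ω i) + (ω i) ^ 2 := fun i => by ring
    rw [Finset.sum_congr rfl fun i _ => hpt i, Finset.sum_add_distrib,
      Finset.sum_sub_distrib, ← Finset.mul_sum, ← hT, ← hW]
  have hexp : ∀ c : ℝ, ∑ i : Fin p, (θ i - (c • ω) i) ^ 2
      = (∑ i : Fin p, (θ i) ^ 2) - 2 * c * T + c ^ 2 * W := by
    intro c
    have hpt : ∀ i : Fin p, (θ i - (c • ω) i) ^ 2
        = (θ i) ^ 2 - (2 * c) * (θ i * ω i) + c ^ 2 * (ω i) ^ 2 := by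
      intro i
      have : (c • ω) i = c * ω i := rfl
      rw [this]; ring
    rw [Finset.sum_congr rfl fun i _ => hpt i, Finset.sum_add_distrib,
      Finset.sum_sub_distrib, ← Finset.mul_sum, ← Finset.mul_sum, ← hT, ← hW]
  -- T = W via the cone property
  have hTW : T = W := by
    have key2 : ∀ ε : ℝ, 0 ≤ 2 * ε * (W - T) + ε ^ 2 * W := by
      intro ε
      have h1 := hle2 ((1 + ε) • ω) (smul_mem_Skd hmem hkp (1 + ε))
      rw [hsub, hsub, hexpω, hexp (1 + ε)] at h1
      nlinarith [h1]
    set a := W - T with ha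
    have hden : (0 : ℝ) < W + 1 := by linarith
    have h := key2 (-(a / (W + 1)))
    have heq : 2 * (-(a / (W + 1))) * a + (-(a / (W + 1))) ^ 2 * W
        = (a ^ 2 * (W - 2 * (W + 1))) / (W + 1) ^ 2 := by
      field_simp
      ring
    rw [heq] at h
    have hnum : 0 ≤ a ^ 2 * (W - 2 * (W + 1)) := by
      by_contra hc
      push_neg at hc
      have : (a ^ 2 * (W - 2 * (W + 1))) / (W + 1) ^ 2 < 0 :=
        div_neg_of_neg_of_pos hc (by positivity)
      linarith
    have ha0 : a = 0 := by nlinarith [sq_nonneg a]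
    have : W - T = 0 := by rw [← ha]; exact ha0
    linarith
  -- upper bound: every partition value is ≤ W
  have hub : ∀ b : ℕ → ℕ, b 0 = 0 → b d = k → (∀ t < d, b t < b (t + 1)) →
      partitionVal θ d b ≤ W := by
    intro b h0 hbd hstrict
    obtain ⟨e, he⟩ := exists_sortPerm θ
    have hβmem : bvec θ d b e ∈ Skd p k d := bvec_mem h0 hbd hstrict hkp he
    have hdd := dist_sq_bvec_total h0 hbd hstrict hkp he
    have h1 := hle2 _ hβmem
    rw [hsub, hsub, hdd, hexpω] at h1
    have habs : ∑ i : Fin p, |θ i| ^ 2 = ∑ i : Fin p, (θ i) ^ 2 :=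
      Finset.sum_congr rfl fun i _ => sq_abs _
    rw [habs] at h1
    linarith [hTW, h1]
  -- membership: an optimal partition is attained
  obtain ⟨b, h0, hbd, hstrict, hkey⟩ := key_ineq hd1 hdk hkp θ hmem
  rw [← hT, ← hW] at hkey
  have hWle : W ≤ partitionVal θ d b := by
    rw [hTW] at hkey
    linarith
  constructor
  · exact ⟨b, h0, hbd, hstrict, by
      rw [hnorm]
      exact le_antisymm hWle (hub b h0 hbd hstrict)⟩
  · rintro v ⟨b', h0', hbd', hstrict', rfl⟩
    rw [hnorm]
    exact hub b' h0' hbd' hstrict'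


end
end

section
/- Let 1 ≤ k ≤ p and let ‖·‖_{k□1} be the structure norm of S_{k,1}, i.e. the gauge of the convex hull of S_{k,1} ∩ {x : ‖x‖₂ = 1}. Then for every β ∈ ℝ^p, ‖β‖_{k□1} = max{ (1/√k)·‖β‖₁, √k·‖β‖_∞ }. -/
open Metric Set
open Pointwise

noncomputable section

/-- The doubly-sparse norm `‖·‖_{k□d}`: the gauge of the convex hull of the unit-norm
elements of `S_{k,d}`. -/
def kdNorm (p k d : ℕ) (β : E p) : ℝ :=
  gauge (convexHull ℝ (Skd p k d ∩ {x : E p | ‖x‖ = 1})) β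



/-- the target norm, on plain pi type -/
noncomputable def Nf (p k : ℕ) (x : Fin p → ℝ) : ℝ :=
  max ((Real.sqrt k)⁻¹ * ∑ i, |x i|) (Real.sqrt k * ⨆ i, |x i|)

lemma Nf_nonneg (p k : ℕ) (x : Fin p → ℝ) : 0 ≤ Nf p k x := by
  have h1 : (0:ℝ) ≤ (Real.sqrt k)⁻¹ * ∑ i, |x i| := by
    apply mul_nonneg (by positivity)
    exact Finset.sum_nonneg fun i _ => abs_nonneg _
  exact le_trans h1 (le_max_left _ _)

lemma Nf_smul (p k : ℕ) {c : ℝ} (hc : 0 ≤ c) (x : Fin p → ℝ) :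
    Nf p k (c • x) = c * Nf p k x := by
  unfold Nf
  have h1 : ∑ i, |(c • x) i| = c * ∑ i, |x i| := by
    rw [Finset.mul_sum]
    refine Finset.sum_congr rfl fun i _ => ?_
    simp [abs_mul, abs_of_nonneg hc]
  have h2 : (⨆ i, |(c • x) i|) = c * ⨆ i, |x i| := by
    rw [Real.mul_iSup_of_nonneg hc]
    refine iSup_congr fun i => ?_
    simp [abs_mul, abs_of_nonneg hc]
  rw [h1, h2, mul_max_of_nonneg _ _ hc]
  ring_nf

lemma gauge_levelset {F : Type*} [AddCommGroup F] [Module ℝ F] (N : F → ℝ)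
    (hom : ∀ c : ℝ, 0 ≤ c → ∀ x, N (c • x) = c * N x) (nonneg : ∀ x, 0 ≤ N x) (x : F) :
    gauge {y | N y ≤ 1} x = N x := by
  have hmem : ∀ r : ℝ, 0 < r → N x ≤ r → x ∈ r • {y | N y ≤ 1} := by
    intro r hr hNx
    rw [mem_smul_set_iff_inv_smul_mem₀ hr.ne']
    show N (r⁻¹ • x) ≤ 1
    rw [hom _ (inv_nonneg.2 hr.le)]
    rw [inv_mul_le_iff₀ hr, mul_one]
    exact hNx
  apply le_antisymm
  · by_contra h
    push_neg at h
    have hε : 0 < (gauge {y | N y ≤ 1} x - N x) / 2 := by linarith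
    set ε := (gauge {y | N y ≤ 1} x - N x) / 2 with hεdef
    have h1 : gauge {y | N y ≤ 1} x ≤ N x + ε :=
      gauge_le_of_mem (by linarith [nonneg x]) (hmem _ (by linarith [nonneg x]) (by linarith))
    linarith
  · rw [gauge_def]
    apply le_csInf
    · refine ⟨N x + 1, Set.mem_sep ?_ (hmem _ (by linarith [nonneg x]) (by linarith))⟩
      simpa using lt_of_le_of_lt (nonneg x) (by linarith)
    · rintro r ⟨hr, hx⟩
      obtain ⟨y, hy, rfl⟩ := hx
      have : N (r • y) = r * N y := hom r (le_of_lt hr) y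
      calc N (r • y) = r * N y := this
        _ ≤ r * 1 := by apply mul_le_mul_of_nonneg_left hy (le_of_lt hr)
        _ = r := mul_one r



def Atoms (p k : ℕ) (a : ℝ) : Set (Fin p → ℝ) :=
  {x | ∃ T : Finset (Fin p), T.card = k ∧ (∀ i ∉ T, x i = 0) ∧ ∀ i ∈ T, |x i| = a}

lemma cube_subset_conv (p k : ℕ) {a : ℝ} (ha : 0 ≤ a) (T : Finset (Fin p))
    (hT : T.card = k) (β : Fin p → ℝ) (h0 : ∀ i ∉ T, β i = 0) (hbd : ∀ i, |β i| ≤ a) :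
    β ∈ convexHull ℝ (Atoms p k a) := by
  set t : Fin p → Set ℝ := fun i => if i ∈ T then {-a, a} else {0} with ht
  have hsub : Set.univ.pi t ⊆ Atoms p k a := by
    intro x hx
    refine ⟨T, hT, fun i hi => ?_, fun i hi => ?_⟩
    · have := hx i (mem_univ i); simpa [ht, hi] using this
    · have := hx i (mem_univ i)
      simp only [ht, if_pos hi, mem_insert_iff, mem_singleton_iff] at this
      rcases this with h | h <;> simp [h, abs_of_nonneg ha]
  refine convexHull_mono hsub ?_
  rw [convexHull_pi]
  intro i _
  by_cases hi : i ∈ T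
  · simp only [ht, if_pos hi]
    rw [convexHull_pair, segment_eq_Icc (by linarith : -a ≤ a)]
    exact abs_le.1 (hbd i)
  · simp [ht, if_neg hi, h0 i hi]

lemma abs_sadd {x : ℝ} (hx : x ≠ 0) {t : ℝ} (ht : 0 ≤ t) :
    |x + t * (if 0 < x then 1 else -1)| = |x| + t := by
  rcases hx.lt_or_gt with h | h
  · rw [if_neg (by linarith), abs_of_neg h, abs_of_nonpos (by linarith)]; ring
  · rw [if_pos h, abs_of_pos h, abs_of_nonneg (by linarith)]; ring

lemma abs_ssub {x : ℝ} (hx : x ≠ 0) {t : ℝ} (ht : 0 ≤ t) (ht2 : t ≤ |x|) :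
    |x - t * (if 0 < x then 1 else -1)| = |x| - t := by
  rcases hx.lt_or_gt with h | h
  · rw [abs_of_neg h] at ht2 ⊢
    rw [if_neg (by linarith), abs_of_nonpos (by linarith)]; ring
  · rw [abs_of_pos h] at ht2 ⊢
    rw [if_pos h, abs_of_nonneg (by linarith)]; ring

/-- If the support is too big, there are at least two "fractional" coordinates. -/
lemma two_frac (p k : ℕ) {a : ℝ} (ha : 0 < a) (β : Fin p → ℝ)
    (hbd : ∀ i, |β i| ≤ a) (hsum : (∑ i, |β i|) ≤ k * a)
    (hs : k < (Finset.univ.filter fun i => β i ≠ 0).card) :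
    1 < (Finset.univ.filter fun i => β i ≠ 0 ∧ |β i| ≠ a).card := by
  set S := Finset.univ.filter fun i => β i ≠ 0 with hSdef
  set F := Finset.univ.filter fun i => β i ≠ 0 ∧ |β i| ≠ a with hFdef
  by_contra h
  push_neg at h
  have hFS : F ⊆ S := by
    intro m hm
    simp only [hFdef, hSdef, Finset.mem_filter] at *
    tauto
  have hallSF : ∀ i ∈ S \ F, |β i| = a := by
    intro i hi
    rw [Finset.mem_sdiff] at hi
    obtain ⟨hiS, hiF⟩ := hi
    simp only [hSdef, Finset.mem_filter, Finset.mem_univ, true_and] at hiS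
    simp only [hFdef, Finset.mem_filter, Finset.mem_univ, true_and, not_and, not_not] at hiF
    exact hiF hiS
  have hsumSF : ∑ i ∈ S \ F, |β i| = ((S \ F).card : ℝ) * a := by
    rw [Finset.sum_congr rfl hallSF, Finset.sum_const, nsmul_eq_mul]
  have hsplit : ∑ i ∈ S \ F, |β i| + ∑ i ∈ F, |β i| = ∑ i ∈ S, |β i| :=
    Finset.sum_sdiff hFS
  have hSle : ∑ i ∈ S, |β i| ≤ ∑ i, |β i| :=
    Finset.sum_le_sum_of_subset_of_nonneg (Finset.filter_subset _ _)
      (fun i _ _ => abs_nonneg _)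
  have hcard : k + 1 ≤ S.card := hs
  rcases Finset.eq_empty_or_nonempty F with hF | ⟨j, hj⟩
  · have h1 : (S \ F).card = S.card := by rw [hF, Finset.sdiff_empty]
    have h2 : ((k : ℝ) + 1) * a ≤ ((S \ F).card : ℝ) * a := by
      apply mul_le_mul_of_nonneg_right _ ha.le
      rw [h1]
      exact_mod_cast hcard
    have h3 : ∑ i ∈ F, |β i| = 0 := by rw [hF, Finset.sum_empty]
    nlinarith
  · have hjS := hFS hj
    simp only [hSdef, Finset.mem_filter, Finset.mem_univ, true_and] at hjS
    have hjpos : 0 < |β j| := abs_pos.2 hjS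
    have hjle : |β j| ≤ ∑ i ∈ F, |β i| :=
      Finset.single_le_sum (f := fun i => |β i|) (fun i _ => abs_nonneg _) hj
    have h1 : k ≤ (S \ F).card := by
      rw [Finset.card_sdiff_of_subset hFS]
      omega
    have h2 : (k : ℝ) * a ≤ ((S \ F).card : ℝ) * a := by
      apply mul_le_mul_of_nonneg_right _ ha.le
      exact_mod_cast h1
    linarith

lemma key_lemma (p k : ℕ) {a : ℝ} (ha : 0 < a) (hk1 : 1 ≤ k) (hkp : k ≤ p) :
    ∀ n (β : Fin p → ℝ),
      (Finset.univ.filter fun i => β i ≠ 0 ∧ |β i| ≠ a).card ≤ n →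
      (∑ i, |β i|) ≤ k * a → (∀ i, |β i| ≤ a) →
      β ∈ convexHull ℝ (Atoms p k a) := by
  intro n
  induction n with
  | zero =>
    intro β hfrac hsum hbd
    by_cases hsupp : (Finset.univ.filter fun i => β i ≠ 0).card ≤ k
    · obtain ⟨T, hsub, hT⟩ := Finset.exists_superset_card_eq hsupp (by simpa using hkp)
      exact cube_subset_conv p k ha.le T hT β
        (fun i hi => by by_contra h; exact hi (hsub (by simp [h]))) hbd
    · push_neg at hsupp
      have := two_frac p k ha β hbd hsum hsupp
      omega
  | succ n ih =>
    intro β hfrac hsum hbd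
    by_cases hsupp : (Finset.univ.filter fun i => β i ≠ 0).card ≤ k
    · obtain ⟨T, hsub, hT⟩ := Finset.exists_superset_card_eq hsupp (by simpa using hkp)
      exact cube_subset_conv p k ha.le T hT β
        (fun i hi => by by_contra h; exact hi (hsub (by simp [h]))) hbd
    push_neg at hsupp
    obtain ⟨i, hi, j, hj, hij⟩ :=
      Finset.one_lt_card.1 (two_frac p k ha β hbd hsum hsupp)
    simp only [Finset.mem_filter, Finset.mem_univ, true_and] at hi hj
    obtain ⟨hi0, hia⟩ := hi
    obtain ⟨hj0, hja⟩ := hj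
    have hilt : |β i| < a := lt_of_le_of_ne (hbd i) hia
    have hjlt : |β j| < a := lt_of_le_of_ne (hbd j) hja
    have hipos : 0 < |β i| := abs_pos.2 hi0
    have hjpos : 0 < |β j| := abs_pos.2 hj0
    set si : ℝ := if 0 < β i then 1 else -1 with hsi
    set sj : ℝ := if 0 < β j then 1 else -1 with hsj
    set tp : ℝ := min (a - |β i|) |β j| with htp
    set tm : ℝ := min |β i| (a - |β j|) with htm
    have htp0 : 0 < tp := lt_min (by linarith) hjpos
    have htm0 : 0 < tm := lt_min hipos (by linarith)
    set γp : Fin p → ℝ :=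
      Function.update (Function.update β i (β i + tp * si)) j (β j - tp * sj) with hγp
    set γm : Fin p → ℝ :=
      Function.update (Function.update β i (β i - tm * si)) j (β j + tm * sj) with hγm
    have hγpi : γp i = β i + tp * si := by
      rw [hγp, Function.update_of_ne hij, Function.update_self]
    have hγpj : γp j = β j - tp * sj := by rw [hγp, Function.update_self]
    have hγmi : γm i = β i - tm * si := by
      rw [hγm, Function.update_of_ne hij, Function.update_self]
    have hγmj : γm j = β j + tm * sj := by rw [hγm, Function.update_self]
    have hγpo : ∀ m, m ≠ i → m ≠ j → γp m = β m := fun m hmi hmj => by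
      rw [hγp, Function.update_of_ne hmj, Function.update_of_ne hmi]
    have hγmo : ∀ m, m ≠ i → m ≠ j → γm m = β m := fun m hmi hmj => by
      rw [hγm, Function.update_of_ne hmj, Function.update_of_ne hmi]
    have habs_pi : |γp i| = |β i| + tp := by rw [hγpi, hsi]; exact abs_sadd hi0 htp0.le
    have habs_pj : |γp j| = |β j| - tp := by
      rw [hγpj, hsj]; exact abs_ssub hj0 htp0.le (min_le_right _ _)
    have habs_mi : |γm i| = |β i| - tm := by
      rw [hγmi, hsi]; exact abs_ssub hi0 htm0.le (min_le_left _ _)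
    have habs_mj : |γm j| = |β j| + tm := by rw [hγmj, hsj]; exact abs_sadd hj0 htm0.le
    -- a generic sum-splitting fact
    have hsum_split : ∀ f : Fin p → ℝ,
        ∑ m, f m = ∑ m ∈ Finset.univ \ {i, j}, f m + (f i + f j) := by
      intro f
      rw [← Finset.sum_sdiff (Finset.subset_univ {i, j}), Finset.sum_pair hij]
    have hoff : ∀ (γ : Fin p → ℝ), (∀ m, m ≠ i → m ≠ j → γ m = β m) →
        ∑ m ∈ Finset.univ \ {i, j}, |γ m| = ∑ m ∈ Finset.univ \ {i, j}, |β m| := by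
      intro γ hγ
      refine Finset.sum_congr rfl fun m hm => ?_
      rw [Finset.mem_sdiff, Finset.mem_insert, Finset.mem_singleton] at hm
      push_neg at hm
      rw [hγ m hm.2.1 hm.2.2]
    have hsum_p : ∑ m, |γp m| = ∑ m, |β m| := by
      rw [hsum_split (fun m => |γp m|), hsum_split (fun m => |β m|),
        hoff γp hγpo, habs_pi, habs_pj]
      ring
    have hsum_m : ∑ m, |γm m| = ∑ m, |β m| := by
      rw [hsum_split (fun m => |γm m|), hsum_split (fun m => |β m|),
        hoff γm hγmo, habs_mi, habs_mj]
      ring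
    have hbd_p : ∀ m, |γp m| ≤ a := by
      intro m
      by_cases hmi : m = i
      · have h1 : tp ≤ a - |β i| := min_le_left _ _
        rw [hmi, habs_pi]; linarith
      by_cases hmj : m = j
      · rw [hmj, habs_pj]; linarith
      · rw [hγpo m hmi hmj]; exact hbd m
    have hbd_m : ∀ m, |γm m| ≤ a := by
      intro m
      by_cases hmi : m = i
      · rw [hmi, habs_mi]; linarith
      by_cases hmj : m = j
      · have h1 : tm ≤ a - |β j| := min_le_right _ _
        rw [hmj, habs_mj]; linarith
      · rw [hγmo m hmi hmj]; exact hbd m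
    -- fractional count decreases
    have hfrac_dec : ∀ (γ : Fin p → ℝ), (∀ m, m ≠ i → m ≠ j → γ m = β m) →
        ((γ i = 0 ∨ |γ i| = a) ∨ (γ j = 0 ∨ |γ j| = a)) →
        (Finset.univ.filter fun m => γ m ≠ 0 ∧ |γ m| ≠ a).card ≤ n := by
      intro γ hγo hwit
      have hiF : i ∈ Finset.univ.filter fun m => β m ≠ 0 ∧ |β m| ≠ a := by
        simp only [Finset.mem_filter, Finset.mem_univ, true_and]; exact ⟨hi0, hia⟩
      have hjF : j ∈ Finset.univ.filter fun m => β m ≠ 0 ∧ |β m| ≠ a := by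
        simp only [Finset.mem_filter, Finset.mem_univ, true_and]; exact ⟨hj0, hja⟩
      have hsub : (Finset.univ.filter fun m => γ m ≠ 0 ∧ |γ m| ≠ a) ⊆
          (Finset.univ.filter fun m => β m ≠ 0 ∧ |β m| ≠ a) := by
        intro m hm
        simp only [Finset.mem_filter, Finset.mem_univ, true_and] at hm ⊢
        by_cases hmi : m = i
        · rw [hmi]; exact ⟨hi0, hia⟩
        by_cases hmj : m = j
        · rw [hmj]; exact ⟨hj0, hja⟩
        · rwa [hγo m hmi hmj] at hm
      have hne : ∃ w ∈ (Finset.univ.filter fun m => β m ≠ 0 ∧ |β m| ≠ a),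
          w ∉ (Finset.univ.filter fun m => γ m ≠ 0 ∧ |γ m| ≠ a) := by
        rcases hwit with hw | hw
        · refine ⟨i, hiF, ?_⟩
          simp only [Finset.mem_filter, Finset.mem_univ, true_and, not_and, not_not]
          tauto
        · refine ⟨j, hjF, ?_⟩
          simp only [Finset.mem_filter, Finset.mem_univ, true_and, not_and, not_not]
          tauto
      obtain ⟨w, hw1, hw2⟩ := hne
      have := Finset.card_lt_card ((Finset.ssubset_iff_of_subset hsub).2 ⟨w, hw1, hw2⟩)
      omega
    have hwit_p : (γp i = 0 ∨ |γp i| = a) ∨ (γp j = 0 ∨ |γp j| = a) := by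
      rcases min_cases (a - |β i|) |β j| with ⟨hmin, _⟩ | ⟨hmin, _⟩
      · left; right; rw [habs_pi, htp, hmin]; ring
      · right; left; rw [← abs_eq_zero, habs_pj, htp, hmin]; ring
    have hwit_m : (γm i = 0 ∨ |γm i| = a) ∨ (γm j = 0 ∨ |γm j| = a) := by
      rcases min_cases |β i| (a - |β j|) with ⟨hmin, _⟩ | ⟨hmin, _⟩
      · left; left; rw [← abs_eq_zero, habs_mi, htm, hmin]; ring
      · right; right; rw [habs_mj, htm, hmin]; ring
    have hp : γp ∈ convexHull ℝ (Atoms p k a) :=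
      ih γp (hfrac_dec γp hγpo hwit_p) (by rw [hsum_p]; exact hsum) hbd_p
    have hm : γm ∈ convexHull ℝ (Atoms p k a) :=
      ih γm (hfrac_dec γm hγmo hwit_m) (by rw [hsum_m]; exact hsum) hbd_m
    set cp : ℝ := tm / (tp + tm) with hcp
    set cm : ℝ := tp / (tp + tm) with hcm
    have hts : 0 < tp + tm := by linarith
    have hcp0 : 0 ≤ cp := by positivity
    have hcm0 : 0 ≤ cm := by positivity
    have hcpm : cp + cm = 1 := by rw [hcp, hcm]; field_simp; ring
    have heq : cp • γp + cm • γm = β := by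
      funext m
      simp only [Pi.add_apply, Pi.smul_apply, smul_eq_mul]
      by_cases hmi : m = i
      · subst hmi
        rw [hγpi, hγmi, hcp, hcm]
        field_simp
        ring
      by_cases hmj : m = j
      · subst hmj
        rw [hγpj, hγmj, hcp, hcm]
        field_simp
        ring
      · rw [hγpo m hmi hmj, hγmo m hmi hmj]
        have : (cp + cm) * β m = β m := by rw [hcpm, one_mul]
        linarith [this]
    exact heq ▸ (convex_convexHull ℝ (Atoms p k a)) hp hm hcp0 hcm0 hcpm


lemma conv_eq_levelset (p k : ℕ) (hk1 : 1 ≤ k) (hkp : k ≤ p) :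
    convexHull ℝ (Atoms p k ((Real.sqrt k)⁻¹)) = {x : Fin p → ℝ | Nf p k x ≤ 1} := by
  haveI : Nonempty (Fin p) := ⟨⟨0, by omega⟩⟩
  have hk0 : (0:ℝ) < (k:ℝ) := by exact_mod_cast Nat.lt_of_lt_of_le Nat.zero_lt_one hk1
  set sk : ℝ := Real.sqrt k with hsk
  have hsk0 : 0 < sk := Real.sqrt_pos.2 hk0
  have hksq : (k:ℝ) = sk * sk := (Real.mul_self_sqrt hk0.le).symm
  set a : ℝ := sk⁻¹ with ha'
  have ha : 0 < a := inv_pos.2 hsk0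
  have hka : (k:ℝ) * a = sk := by
    rw [hksq, ha', mul_assoc, mul_inv_cancel₀ hsk0.ne', mul_one]
  apply Set.Subset.antisymm
  · apply convexHull_min
    · rintro x ⟨T, hT, h0, h1⟩
      have hsum : ∑ i, |x i| = (k:ℝ) * a := by
        rw [← Finset.sum_subset (Finset.subset_univ T)
          (fun i _ hi => abs_eq_zero.2 (h0 i hi))]
        rw [Finset.sum_congr rfl h1, Finset.sum_const, hT, nsmul_eq_mul]
      have hsup : (⨆ i, |x i|) ≤ a := by
        refine ciSup_le fun i => ?_
        by_cases hi : i ∈ T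
        · rw [h1 i hi]
        · rw [h0 i hi]; simpa using ha.le
      show Nf p k x ≤ 1
      unfold Nf
      apply max_le
      · rw [hsum, hka, ← hsk, inv_mul_cancel₀ hsk0.ne']
      · calc sk * ⨆ i, |x i| ≤ sk * a := by
              apply mul_le_mul_of_nonneg_left hsup hsk0.le
          _ = 1 := by rw [ha', mul_inv_cancel₀ hsk0.ne']
    · intro x hx y hy c d hc hd hcd
      simp only [mem_setOf_eq] at hx hy ⊢
      have hx1 : sk⁻¹ * ∑ i, |x i| ≤ 1 := le_trans (le_max_left _ _) hx
      have hx2 : sk * (⨆ i, |x i|) ≤ 1 := le_trans (le_max_right _ _) hx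
      have hy1 : sk⁻¹ * ∑ i, |y i| ≤ 1 := le_trans (le_max_left _ _) hy
      have hy2 : sk * (⨆ i, |y i|) ≤ 1 := le_trans (le_max_right _ _) hy
      have hbdd : ∀ z : Fin p → ℝ, BddAbove (Set.range fun i => |z i|) :=
        fun z => (Set.finite_range _).bddAbove
      unfold Nf
      apply max_le
      · have hs : ∑ i, |(c • x + d • y) i| ≤ c * ∑ i, |x i| + d * ∑ i, |y i| := by
          calc ∑ i, |(c • x + d • y) i| ≤ ∑ i, (c * |x i| + d * |y i|) := by
                refine Finset.sum_le_sum fun i _ => ?_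
                simp only [Pi.add_apply, Pi.smul_apply, smul_eq_mul]
                calc |c * x i + d * y i| ≤ |c * x i| + |d * y i| := abs_add_le _ _
                  _ = c * |x i| + d * |y i| := by
                      rw [abs_mul, abs_mul, abs_of_nonneg hc, abs_of_nonneg hd]
            _ = c * ∑ i, |x i| + d * ∑ i, |y i| := by
                rw [Finset.sum_add_distrib, ← Finset.mul_sum, ← Finset.mul_sum]
        have h2 : sk⁻¹ * ∑ i, |(c • x + d • y) i| ≤
            c * (sk⁻¹ * ∑ i, |x i|) + d * (sk⁻¹ * ∑ i, |y i|) := by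
          have := mul_le_mul_of_nonneg_left hs (inv_nonneg.2 hsk0.le)
          calc sk⁻¹ * ∑ i, |(c • x + d • y) i|
              ≤ sk⁻¹ * (c * ∑ i, |x i| + d * ∑ i, |y i|) := this
            _ = c * (sk⁻¹ * ∑ i, |x i|) + d * (sk⁻¹ * ∑ i, |y i|) := by ring
        calc sk⁻¹ * ∑ i, |(c • x + d • y) i|
            ≤ c * (sk⁻¹ * ∑ i, |x i|) + d * (sk⁻¹ * ∑ i, |y i|) := h2
          _ ≤ c * 1 + d * 1 := by
              apply add_le_add (mul_le_mul_of_nonneg_left hx1 hc)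
                (mul_le_mul_of_nonneg_left hy1 hd)
          _ = 1 := by rw [mul_one, mul_one, hcd]
      · have hs : (⨆ i, |(c • x + d • y) i|) ≤
            c * (⨆ i, |x i|) + d * (⨆ i, |y i|) := by
          refine ciSup_le fun i => ?_
          simp only [Pi.add_apply, Pi.smul_apply, smul_eq_mul]
          calc |c * x i + d * y i| ≤ |c * x i| + |d * y i| := abs_add_le _ _
            _ = c * |x i| + d * |y i| := by
                rw [abs_mul, abs_mul, abs_of_nonneg hc, abs_of_nonneg hd]
            _ ≤ c * (⨆ i, |x i|) + d * (⨆ i, |y i|) := by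
                apply add_le_add
                · exact mul_le_mul_of_nonneg_left (le_ciSup (hbdd x) i) hc
                · exact mul_le_mul_of_nonneg_left (le_ciSup (hbdd y) i) hd
        calc sk * ⨆ i, |(c • x + d • y) i|
            ≤ sk * (c * (⨆ i, |x i|) + d * (⨆ i, |y i|)) :=
              mul_le_mul_of_nonneg_left hs hsk0.le
          _ = c * (sk * ⨆ i, |x i|) + d * (sk * ⨆ i, |y i|) := by ring
          _ ≤ c * 1 + d * 1 := by
              apply add_le_add (mul_le_mul_of_nonneg_left hx2 hc)
                (mul_le_mul_of_nonneg_left hy2 hd)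
          _ = 1 := by rw [mul_one, mul_one, hcd]
  · intro x hx
    simp only [mem_setOf_eq] at hx
    have hx1 : sk⁻¹ * ∑ i, |x i| ≤ 1 := le_trans (le_max_left _ _) hx
    have hx2 : sk * (⨆ i, |x i|) ≤ 1 := le_trans (le_max_right _ _) hx
    have h1 : ∑ i, |x i| ≤ (k:ℝ) * a := by
      rw [hka]
      rw [inv_mul_le_iff₀ hsk0, mul_one] at hx1
      exact hx1
    have h2 : ∀ i, |x i| ≤ a := by
      intro i
      have hsup : (⨆ i, |x i|) ≤ a := by
        rw [ha', ← one_div]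
        rw [mul_comm] at hx2
        exact (le_div_iff₀ hsk0).2 hx2
      exact le_trans (le_ciSup (f := fun i => |x i|) ((Set.finite_range _).bddAbove) i) hsup
    exact key_lemma p k ha hk1 hkp _ x le_rfl h1 h2


lemma sorted_replicate (n : ℕ) (c : ℝ) : List.Pairwise (· ≥ ·) (List.replicate n c) := by
  induction n with
  | zero => simp
  | succ n ih =>
    rw [List.replicate_succ, List.pairwise_cons]
    exact ⟨fun b hb => le_of_eq (List.eq_of_mem_replicate hb), ih⟩

lemma sortedAbs_multiset {p : ℕ} (β : E p) :
    (sortedAbs β : Multiset ℝ) = Multiset.map (fun i => |β i|) Finset.univ.val := by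
  rw [Fin.univ_val_map]
  exact Multiset.coe_eq_coe.2 (List.perm_insertionSort _ _)

lemma skd_inter_sphere (p k : ℕ) (hk1 : 1 ≤ k) (hkp : k ≤ p) :
    Skd p k 1 ∩ {x : E p | ‖x‖ = 1} = WithLp.ofLp ⁻¹' Atoms p k ((Real.sqrt k)⁻¹) := by
  have hk0 : (0:ℝ) < (k:ℝ) := by exact_mod_cast Nat.lt_of_lt_of_le Nat.zero_lt_one hk1
  have hsk0 : 0 < Real.sqrt k := Real.sqrt_pos.2 hk0
  ext β
  constructor
  · rintro ⟨⟨hcard, himg⟩, hnorm⟩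
    simp only [mem_setOf_eq] at hnorm
    set l := sortedAbs β with hl
    have hperm : l.Perm (List.ofFn fun i => |β i|) := List.perm_insertionSort _ _
    have hsort : l.Pairwise (· ≥ ·) := List.pairwise_insertionSort _ _
    have hlen : l.length = p := by rw [hperm.length_eq, List.length_ofFn]
    have hnn : ∀ x ∈ l, 0 ≤ x := by
      intro x hx
      rw [hperm.mem_iff, List.mem_ofFn] at hx
      obtain ⟨i, rfl⟩ := hx
      exact abs_nonneg _
    set a := l.getD 0 0 with ha
    have hget : ∀ m, m < k → l.getD m 0 = a := by
      intro m hm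
      have h1 : (l.getD m 0) ∈ (Finset.range k).image fun i => l.getD i 0 :=
        Finset.mem_image_of_mem _ (Finset.mem_range.2 hm)
      have h2 : (l.getD 0 0) ∈ (Finset.range k).image fun i => l.getD i 0 :=
        Finset.mem_image_of_mem _ (Finset.mem_range.2 (by omega))
      exact Finset.card_le_one.1 himg _ h1 _ h2
    have hlpos : 0 < l.length := by omega
    have hann : 0 ≤ a := by
      rw [ha, List.getD_eq_getElem l 0 hlpos]
      exact hnn _ (List.getElem_mem _)
    have hapos : 0 < a := by
      rcases hann.lt_or_eq with h | h
      · exact h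
      · exfalso
        have hz : ∀ x ∈ l, x = 0 := by
          intro x hx
          obtain ⟨m, hm, rfl⟩ := List.mem_iff_getElem.1 hx
          have h1 : l[m] ≤ l[0] := by
            have := hsort.rel_get_of_le (a := (⟨0, hlpos⟩ : Fin l.length))
              (b := ⟨m, hm⟩) (by simp)
            simpa [List.get_eq_getElem] using this
          have h2 : l[0] = a := by rw [ha, List.getD_eq_getElem l 0 hlpos]
          have h3 := hnn _ (List.getElem_mem hm)
          linarith [h1, h2 ▸ h1]
        have hβ0 : β = 0 := by
          ext i
          have hmem : |β i| ∈ l := by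
            rw [hperm.mem_iff, List.mem_ofFn]
            exact ⟨i, rfl⟩
          have := hz _ hmem
          simpa [abs_eq_zero] using this
        rw [hβ0] at hnorm
        simp at hnorm
    -- the first k entries of l are all equal to a; count nonzero entries
    have htake : l.take k = List.replicate k a := by
      rw [List.eq_replicate_iff]
      constructor
      · rw [List.length_take, hlen]; omega
      · intro x hx
        obtain ⟨m, hm, rfl⟩ := List.mem_iff_getElem.1 hx
        have hmk : m < k := by
          have := List.length_take (i := k) (l := l)
          rw [hlen] at this
          omega
        have hml : m < l.length := by omega
        rw [List.getElem_take]
        rw [← List.getD_eq_getElem l 0 hml]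
        exact hget m hmk
    have hcoe : (l : Multiset ℝ) = ↑(l.take k) + ↑(l.drop k) := by
      rw [Multiset.coe_add, List.take_append_drop]
    set P : ℝ → Prop := fun x => x ≠ 0 with hP
    have hcnt_take : Multiset.countP P ↑(l.take k) = k := by
      rw [htake, Multiset.coe_replicate]
      rw [Multiset.countP_eq_card.2]
      · simp
      · intro x hx
        rw [Multiset.eq_of_mem_replicate hx]
        exact hapos.ne'
    have hcnt : Multiset.countP P ↑l = (Finset.univ.filter fun i => β i ≠ 0).card := by
      have h1 : (l : Multiset ℝ) = Multiset.map (fun i => |β i|) Finset.univ.val := by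
        rw [Fin.univ_val_map]
        exact Multiset.coe_eq_coe.2 hperm
      rw [h1, Multiset.countP_map]
      have h2 : (Finset.univ.filter fun i => β i ≠ 0) =
          Finset.univ.filter fun i => P (|β i|) := by
        apply Finset.filter_congr
        intro i _
        simp [hP, abs_ne_zero]
      rw [h2]
      rfl
    have hcnt_drop : Multiset.countP P ↑(l.drop k) = 0 := by
      have := hcnt
      rw [hcoe, Multiset.countP_add, hcnt_take] at this
      omega
    have hdrop0 : ∀ x ∈ l.drop k, x = 0 := by
      intro x hx
      have := Multiset.countP_eq_zero.1 hcnt_drop x (by exact_mod_cast hx)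
      simpa [hP, not_not] using this
    have hcard_eq : (Finset.univ.filter fun i => β i ≠ 0).card = k := by
      have h1 : k ≤ (Finset.univ.filter fun i => β i ≠ 0).card := by
        rw [← hcnt, hcoe, Multiset.countP_add, hcnt_take]
        omega
      omega
    have hnz : ∀ i, β i ≠ 0 → |β i| = a := by
      intro i hi
      have hmem : |β i| ∈ l := by
        rw [hperm.mem_iff, List.mem_ofFn]
        exact ⟨i, rfl⟩
      rw [← List.take_append_drop k l, List.mem_append] at hmem
      rcases hmem with h | h
      · rw [htake] at h
        exact List.eq_of_mem_replicate h
      · exact absurd (hdrop0 _ h) (abs_ne_zero.2 hi)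
    -- compute a from the norm
    have hnormsq : ∑ i, |β i| ^ 2 = (k:ℝ) * a ^ 2 := by
      have h1 : ∑ i, |β i| ^ 2 =
          ∑ i ∈ Finset.univ.filter (fun i => β i ≠ 0), |β i| ^ 2 := by
        rw [Finset.sum_filter_of_ne]
        intro i _ h
        intro hβi
        rw [hβi] at h
        simp at h
      rw [h1, Finset.sum_congr rfl (fun i hi => by
        rw [hnz i (by simpa using (Finset.mem_filter.1 hi).2)]),
        Finset.sum_const, hcard_eq, nsmul_eq_mul]
    have hn2 : ∑ i, |β i| ^ 2 = 1 := by
      have := hnorm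
      rw [EuclideanSpace.norm_eq] at this
      have h2 : ∑ i, ‖β i‖ ^ 2 = 1 := by
        have := congrArg (fun x => x ^ 2) this
        simp only [one_pow] at this
        rw [← this, Real.sq_sqrt (Finset.sum_nonneg fun i _ => sq_nonneg _)]
      simpa [Real.norm_eq_abs] using h2
    have hka2 : (k:ℝ) * a ^ 2 = 1 := by rw [← hnormsq, hn2]
    have haval : a = (Real.sqrt k)⁻¹ := by
      have ha2 : a ^ 2 = ((k:ℝ))⁻¹ := by
        field_simp at hka2 ⊢
        linarith
      rw [← Real.sqrt_sq hapos.le, ha2, Real.sqrt_inv]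
    exact ⟨Finset.univ.filter fun i => β i ≠ 0, hcard_eq,
      fun i hi => by simpa using hi,
      fun i hi => (haval ▸ hnz i (by simpa using hi))⟩
  · rintro ⟨T, hT, h0, h1⟩
    set a : ℝ := (Real.sqrt k)⁻¹ with ha
    have hapos : 0 < a := inv_pos.2 hsk0
    have hsupp : (Finset.univ.filter fun i => β i ≠ 0) ⊆ T := by
      intro i hi
      simp only [Finset.mem_filter, Finset.mem_univ, true_and] at hi
      by_contra h
      exact hi (h0 i h)
    have hnormsq : ∑ i, |β i| ^ 2 = 1 := by
      have h2 : ∑ i, |β i| ^ 2 = ∑ i ∈ T, |β i| ^ 2 := by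
        rw [← Finset.sum_subset (Finset.subset_univ T)]
        intro i _ hi
        rw [h0 i hi]
        simp
      rw [h2, Finset.sum_congr rfl (fun i hi => by rw [h1 i hi]), Finset.sum_const,
        hT, nsmul_eq_mul, ha]
      rw [inv_pow, Real.sq_sqrt hk0.le]
      field_simp
    have hlm : (sortedAbs β : Multiset ℝ) =
        ↑(List.replicate k a ++ List.replicate (p - k) (0:ℝ)) := by
      rw [sortedAbs_multiset]
      rw [← Multiset.coe_add, Multiset.coe_replicate, Multiset.coe_replicate]
      have hval : Finset.univ.val = T.val + (Finset.univ \ T).val := by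
        rw [Finset.sdiff_val,
          add_tsub_cancel_of_le (Finset.val_le_iff.2 (Finset.subset_univ T))]
      rw [hval, Multiset.map_add]
      congr 1
      · rw [Multiset.map_congr rfl (fun i hi => h1 i hi), Multiset.map_const']
        congr 1
      · rw [Multiset.map_congr rfl (fun i (hi : i ∈ (Finset.univ \ T).val) => by
          have : i ∉ T := (Finset.mem_sdiff.1 hi).2
          rw [h0 i this, abs_zero]), Multiset.map_const']
        congr 1
        show (Finset.univ \ T).card = p - k
        rw [Finset.card_sdiff_of_subset (Finset.subset_univ T), hT, Finset.card_univ,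
          Fintype.card_fin]
    have hsorted2 : List.Pairwise (· ≥ ·)
        (List.replicate k a ++ List.replicate (p - k) (0:ℝ)) := by
      rw [List.pairwise_append]
      refine ⟨sorted_replicate k a, sorted_replicate (p - k) 0, fun x hx y hy => ?_⟩
      rw [List.eq_of_mem_replicate hx, List.eq_of_mem_replicate hy]
      exact hapos.le
    have hleq : sortedAbs β = List.replicate k a ++ List.replicate (p - k) (0:ℝ) :=
      List.Perm.eq_of_pairwise (fun a b _ _ h1 h2 => le_antisymm h2 h1)
        (List.pairwise_insertionSort _ _) hsorted2 (Multiset.coe_eq_coe.1 hlm)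
    have hlen2 : (List.replicate k a ++ List.replicate (p - k) (0:ℝ)).length = p := by
      rw [List.length_append, List.length_replicate, List.length_replicate]
      omega
    have hgetd : ∀ m, m < k → (sortedAbs β).getD m 0 = a := by
      intro m hm
      rw [hleq, List.getD_eq_getElem _ 0 (by rw [hlen2]; omega),
        List.getElem_append_left (by rw [List.length_replicate]; omega),
        List.getElem_replicate]
    refine ⟨⟨(Finset.card_le_card hsupp).trans (le_of_eq hT), ?_⟩, ?_⟩
    · apply Finset.card_le_one.2
      intro x hx y hy
      obtain ⟨m, hm, rfl⟩ := Finset.mem_image.1 hx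
      obtain ⟨m2, hm2, rfl⟩ := Finset.mem_image.1 hy
      rw [hgetd m (Finset.mem_range.1 hm), hgetd m2 (Finset.mem_range.1 hm2)]
    · show ‖β‖ = 1
      rw [EuclideanSpace.norm_eq]
      have : ∑ i, ‖β i‖ ^ 2 = 1 := by simpa [Real.norm_eq_abs] using hnormsq
      rw [this, Real.sqrt_one]

/-- `‖β‖_{k□1} = max{ ‖β‖₁/√k , √k·‖β‖_∞ }`. -/
theorem kdNorm_k_one (p k : ℕ) (hk1 : 1 ≤ k) (hkp : k ≤ p) (β : E p) :
    kdNorm p k 1 β =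
      max ((Real.sqrt k)⁻¹ * ∑ i, |β i|) (Real.sqrt k * ⨆ i, |β i|) := by
  have hA : Skd p k 1 ∩ {x : E p | ‖x‖ = 1} = WithLp.ofLp ⁻¹' Atoms p k ((Real.sqrt k)⁻¹) :=
    skd_inter_sphere p k hk1 hkp
  have key : gauge (convexHull ℝ (WithLp.ofLp ⁻¹' Atoms p k ((Real.sqrt k)⁻¹) : Set (E p))) β
      = Nf p k (WithLp.ofLp β) := by
    have h1 : (WithLp.ofLp ⁻¹' Atoms p k ((Real.sqrt k)⁻¹) : Set (E p)) =
        (WithLp.linearEquiv 2 ℝ (Fin p → ℝ)).symm.toLinearMap '' Atoms p k ((Real.sqrt k)⁻¹) := by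
      ext x
      constructor
      · intro hx; exact ⟨WithLp.ofLp x, hx, rfl⟩
      · rintro ⟨y, hy, rfl⟩; exact hy
    have hc : convexHull ℝ (WithLp.ofLp ⁻¹' Atoms p k ((Real.sqrt k)⁻¹) : Set (E p)) =
        {x : E p | Nf p k (WithLp.ofLp x) ≤ 1} := by
      rw [h1, ← LinearMap.image_convexHull, conv_eq_levelset p k hk1 hkp]
      ext x
      constructor
      · rintro ⟨y, hy, rfl⟩; exact hy
      · intro hx; exact ⟨WithLp.ofLp x, hx, rfl⟩
    rw [hc]
    exact gauge_levelset (fun x : E p => Nf p k (WithLp.ofLp x))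
      (fun c hc x => by simp only [WithLp.ofLp_smul]; exact Nf_smul p k hc _)
      (fun x => Nf_nonneg p k _) β
  unfold kdNorm
  rw [hA]
  exact key

end
end

section
/- Let 1 ≤ k ≤ p and let ‖·‖_{k□1} be the structure norm of S_{k,1} (the gauge of the convex hull of S_{k,1} ∩ {x : ‖x‖₂ = 1}), with dual norm ‖θ‖_{k□1}⋆ = sup{⟨θ,β⟩ : ‖β‖_{k□1} ≤ 1}. Then for every θ ∈ ℝ^p, ‖θ‖_{k□1}⋆ = (1/√k)·Σ_{i=1}^k θ̄ᵢ, the scaled sum of the k largest absolute values of the entries of θ. -/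
open Metric Set

noncomputable section

lemma exists_sort_perm {p : ℕ} (β : E p) :
    ∃ σ : Equiv.Perm (Fin p), (∀ i : Fin p, (sortedAbs β).getD i 0 = |β (σ i)|) ∧
      Antitone (fun i : Fin p => |β (σ i)|) := by
  classical
  set f : Fin p → ℝ := fun i => |β i| with hf
  set σ : Equiv.Perm (Fin p) := Fin.revPerm.trans (Tuple.sort f) with hσ
  have hanti : Antitone (f ∘ σ) := by
    intro i j hij
    exact Tuple.monotone_sort f (by simpa using Fin.rev_le_rev.mpr hij)
  have heq : sortedAbs β = List.ofFn (f ∘ σ) := by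
    apply List.Perm.eq_of_pairwise (le := (· ≥ ·)) (fun a b _ _ h1 h2 => le_antisymm h2 h1)
    · exact List.pairwise_insertionSort _ _
    · exact List.pairwise_ofFn.mpr fun i j hij => hanti hij.le
    · exact (List.perm_insertionSort _ _).trans (Equiv.Perm.ofFn_comp_perm σ f).symm
  refine ⟨σ, fun i => ?_, hanti⟩
  rw [heq, List.getD_eq_getElem _ _ (by simpa using i.isLt), List.getElem_ofFn]
  simp [f]

lemma card_filter_lt {p m : ℕ} (hm : m ≤ p) :
    (Finset.univ.filter fun j : Fin p => (j : ℕ) < m).card = m := by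
  classical
  have : (Finset.univ.filter fun j : Fin p => (j : ℕ) < m) =
      Finset.map (Fin.castLEEmb hm) Finset.univ := by
    ext j
    simp only [Finset.mem_filter, Finset.mem_univ, true_and, Finset.mem_map]
    constructor
    · intro hj; exact ⟨⟨j, hj⟩, rfl⟩
    · rintro ⟨i, rfl⟩; exact i.isLt
  rw [this, Finset.card_map, Finset.card_univ, Fintype.card_fin]

lemma strictMono_nat_le {k : ℕ} (g : Fin k → ℕ) (hg : StrictMono g) (i : Fin k) :
    (i : ℕ) ≤ g i := by
  obtain ⟨n, hn⟩ := i
  induction n with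
  | zero => exact Nat.zero_le _
  | succ m ih =>
    have hm : m < k := Nat.lt_of_succ_lt hn
    exact Nat.lt_of_le_of_lt (ih hm) (hg (show (⟨m, hm⟩ : Fin k) < ⟨m + 1, hn⟩ by
      simp [Fin.lt_def]))

lemma sum_le_topk {p k : ℕ} (hkp : k ≤ p) (h : Fin p → ℝ) (hh : Antitone h)
    (s : Finset (Fin p)) (hs : s.card = k) :
    ∑ x ∈ s, h x ≤ ∑ i : Fin k, h (Fin.castLE hkp i) := by
  classical
  set e := s.orderEmbOfFin hs with he
  have hmap : Finset.map e.toEmbedding Finset.univ = s := by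
    ext j
    simp only [Finset.mem_map, Finset.mem_univ, true_and]
    constructor
    · rintro ⟨i, rfl⟩; exact Finset.orderEmbOfFin_mem s hs i
    · intro hj
      have : j ∈ Set.range e := by rw [Finset.range_orderEmbOfFin]; exact hj
      obtain ⟨i, rfl⟩ := this; exact ⟨i, rfl⟩
  rw [← hmap, Finset.sum_map]
  apply Finset.sum_le_sum
  intro i _
  apply hh
  have : (i : ℕ) ≤ ((e i : Fin p) : ℕ) :=
    strictMono_nat_le (fun j => ((e j : Fin p) : ℕ))
      (fun a b hab => by exact_mod_cast e.strictMono hab) i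
  simpa [Fin.le_def] using this

lemma card_filter_comp {p : ℕ} (σ : Equiv.Perm (Fin p)) (P : Fin p → Prop) [DecidablePred P] :
    (Finset.univ.filter fun i => P (σ i)).card = (Finset.univ.filter P).card := by
  apply Finset.card_bij' (fun i _ => σ i) (fun j _ => σ.symm j) <;>
    simp +contextual [Finset.mem_filter]

lemma sqrtk_pos {k : ℕ} (hk1 : 1 ≤ k) : 0 < (Real.sqrt k)⁻¹ := by
  have : (0:ℝ) < Real.sqrt k := Real.sqrt_pos.mpr (by exact_mod_cast hk1)
  positivity

def bvec (p k : ℕ) (σ : Equiv.Perm (Fin p)) (ε : Fin p → ℝ) : E p :=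
  WithLp.toLp 2 (fun i => if ((σ.symm i : Fin p) : ℕ) < k then (Real.sqrt k)⁻¹ * ε i else 0)

lemma abs_bvec {p k : ℕ} (hk1 : 1 ≤ k) (σ : Equiv.Perm (Fin p)) (ε : Fin p → ℝ)
    (hε : ∀ i, |ε i| = 1) (i : Fin p) :
    |bvec p k σ ε i| = if ((σ.symm i : Fin p) : ℕ) < k then (Real.sqrt k)⁻¹ else 0 := by
  unfold bvec
  simp only [PiLp.toLp_apply]
  split <;> simp [abs_mul, hε, abs_of_pos (sqrtk_pos hk1)]

lemma bvec_mem {p k : ℕ} (hk1 : 1 ≤ k) (hkp : k ≤ p) (σ : Equiv.Perm (Fin p)) (ε : Fin p → ℝ)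
    (hε : ∀ i, |ε i| = 1) :
    bvec p k σ ε ∈ Skd p k 1 ∩ {x : E p | ‖x‖ = 1} := by
  classical
  set c := (Real.sqrt k)⁻¹ with hc
  have hcpos : 0 < c := sqrtk_pos hk1
  set b := bvec p k σ ε with hb
  have habs : ∀ i, |b i| = if ((σ.symm i : Fin p) : ℕ) < k then c else 0 :=
    abs_bvec hk1 σ ε hε
  have hne : ∀ i, b i ≠ 0 ↔ ((σ.symm i : Fin p) : ℕ) < k := by
    intro i
    rw [← abs_ne_zero, habs i]
    split <;> simp_all [hcpos.ne'] <;> omega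
  have hsupp : (Finset.univ.filter fun i => b i ≠ 0).card = k := by
    rw [show (Finset.univ.filter fun i => b i ≠ 0) =
        (Finset.univ.filter fun i => ((σ.symm i : Fin p) : ℕ) < k) by
      ext i; simp [hne i]]
    rw [card_filter_comp σ.symm (fun j => (j : ℕ) < k)]
    exact card_filter_lt hkp
  refine ⟨⟨le_of_eq hsupp, ?_⟩, ?_⟩
  · -- sorted condition
    obtain ⟨τ, hτ, hanti⟩ := exists_sort_perm b
    set h : Fin p → ℝ := fun i => |b (τ i)| with hh
    have hA : (Finset.univ.filter fun i => h i = c).card = k := by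
      rw [card_filter_comp τ (fun j => |b j| = c)]
      rw [show (Finset.univ.filter fun j => |b j| = c) =
          (Finset.univ.filter fun j => ((σ.symm j : Fin p) : ℕ) < k) by
        ext j
        simp only [Finset.mem_filter, Finset.mem_univ, true_and, habs j]
        split
        · simp_all
        · exact iff_of_false (fun h => hcpos.ne' h.symm) (by omega)]
      rw [card_filter_comp σ.symm (fun j => (j : ℕ) < k)]
      exact card_filter_lt hkp
    have hvals : ∀ i, h i = c ∨ h i = 0 := by
      intro i; rw [hh]; simp only; rw [habs (τ i)]; split
      · exact Or.inl rfl
      · exact Or.inr rfl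
    have hik : ∀ i : Fin p, (i : ℕ) < k → h i = c := by
      intro i hi
      by_contra hne'
      have hi0 : h i = 0 := (hvals i).resolve_left hne'
      have hsub : (Finset.univ.filter fun j => h j = c) ⊆
          (Finset.univ.filter fun j : Fin p => (j : ℕ) < (i : ℕ)) := by
        intro j hj
        simp only [Finset.mem_filter, Finset.mem_univ, true_and] at hj ⊢
        by_contra hij
        push_neg at hij
        have : h j ≤ h i := hanti (Fin.le_def.mpr hij)
        have hj0 : h j ≤ 0 := by rw [← hi0]; exact this
        rw [hj] at hj0
        exact absurd (le_antisymm hj0 hcpos.le) hcpos.ne'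
      have := Finset.card_le_card hsub
      rw [hA, card_filter_lt (le_of_lt i.isLt)] at this
      omega
    apply Finset.card_le_one.mpr
    intro a ha b' hb'
    simp only [Finset.mem_image, Finset.mem_range] at ha hb'
    obtain ⟨ia, hia, rfl⟩ := ha
    obtain ⟨ib, hib, rfl⟩ := hb'
    rw [hτ ⟨ia, lt_of_lt_of_le hia hkp⟩, hτ ⟨ib, lt_of_lt_of_le hib hkp⟩]
    have h1 := hik ⟨ia, lt_of_lt_of_le hia hkp⟩ hia
    have h2 := hik ⟨ib, lt_of_lt_of_le hib hkp⟩ hib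
    rw [hh] at h1 h2
    simp only at h1 h2
    rw [h1, h2]
  · -- norm
    show ‖b‖ = 1
    rw [EuclideanSpace.norm_eq]
    have : ∑ i, ‖b i‖ ^ 2 = ∑ j, ‖b (σ j)‖ ^ 2 := (Equiv.sum_comp σ fun i => ‖b i‖ ^ 2).symm
    rw [this]
    have hterm : ∀ j : Fin p, ‖b (σ j)‖ ^ 2 = if (j : ℕ) < k then c ^ 2 else 0 := by
      intro j
      rw [Real.norm_eq_abs, ← sq_abs, habs (σ j), Equiv.symm_apply_apply]
      split <;> simp
    rw [Finset.sum_congr rfl fun j _ => hterm j]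
    rw [Fin.sum_univ_eq_sum_range (fun n => if n < k then c ^ 2 else 0) p]
    rw [← Finset.sum_subset (Finset.range_subset_range.mpr hkp)
      (fun x _ hx => by simp [Finset.mem_range.not.mp hx])]
    rw [Finset.sum_congr rfl (fun x hx => if_pos (Finset.mem_range.mp hx))]
    rw [Finset.sum_const, Finset.card_range, nsmul_eq_mul]
    rw [hc, inv_pow, Real.sq_sqrt (by positivity : (0:ℝ) ≤ (k:ℝ))]
    rw [mul_inv_cancel₀ (by exact_mod_cast Nat.one_le_iff_ne_zero.mp hk1)]
    exact Real.sqrt_one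

lemma sum_getD_eq {p k : ℕ} (hkp : k ≤ p) (θ : E p) (σ : Equiv.Perm (Fin p))
    (hσ : ∀ i : Fin p, (sortedAbs θ).getD i 0 = |θ (σ i)|) :
    ∑ i ∈ Finset.range k, (sortedAbs θ).getD i 0 = ∑ i : Fin k, |θ (σ (Fin.castLE hkp i))| := by
  rw [← Fin.sum_univ_eq_sum_range (fun i => (sortedAbs θ).getD i 0) k]
  refine Finset.sum_congr rfl fun i _ => ?_
  exact hσ (Fin.castLE hkp i)

lemma inner_le_topk {p k : ℕ} (hk1 : 1 ≤ k) (hkp : k ≤ p) (θ : E p) {x : E p}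
    (hx : x ∈ Skd p k 1) (hnx : ‖x‖ = 1) :
    ∑ i, θ i * x i ≤ (Real.sqrt k)⁻¹ * ∑ i ∈ Finset.range k, (sortedAbs θ).getD i 0 := by
  classical
  have hp : 0 < p := lt_of_lt_of_le hk1 hkp
  obtain ⟨τ, hτ, hanti⟩ := exists_sort_perm x
  set h : Fin p → ℝ := fun i => |x (τ i)| with hh
  set v : ℝ := h ⟨0, hp⟩ with hv
  have hveq : ∀ i : Fin p, (i : ℕ) < k → h i = v := by
    intro i hi
    have hcard := hx.2
    have h1 : h i ∈ (Finset.range k).image fun j => (sortedAbs x).getD j 0 := by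
      refine Finset.mem_image.mpr ⟨(i : ℕ), Finset.mem_range.mpr hi, ?_⟩
      rw [hτ ⟨(i : ℕ), i.isLt⟩]
    have h2 : v ∈ (Finset.range k).image fun j => (sortedAbs x).getD j 0 := by
      refine Finset.mem_image.mpr ⟨0, Finset.mem_range.mpr hk1, ?_⟩
      rw [hτ ⟨0, hp⟩]
    exact Finset.card_le_one.mp hcard _ h1 _ h2
  have hvnonneg : 0 ≤ v := abs_nonneg _
  have hvpos : 0 < v := by
    rcases hvnonneg.lt_or_eq with hlt | heq
    · exact hlt
    · exfalso
      have hx0 : x = 0 := by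
        ext j
        have h1 : h (τ.symm j) ≤ v := hanti (show (⟨0, hp⟩ : Fin p) ≤ τ.symm j from
          Fin.le_def.mpr (Nat.zero_le _))
        have h2 : |x j| ≤ v := by
          simp only [hh] at h1
          rwa [Equiv.apply_symm_apply] at h1
        have := abs_nonneg (x j)
        have : |x j| = 0 := le_antisymm (heq ▸ h2) this
        simpa using this
      rw [hx0] at hnx
      simp at hnx
  set B := Finset.univ.filter fun j : Fin p => |x j| = v with hB
  set supp := Finset.univ.filter fun j : Fin p => x j ≠ 0 with hsupp
  have hBk : k ≤ B.card := by
    have hsub : (Finset.univ.filter fun j : Fin p => ((τ.symm j : Fin p) : ℕ) < k) ⊆ B := by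
      intro j hj
      simp only [Finset.mem_filter, Finset.mem_univ, true_and] at hj ⊢
      have := hveq (τ.symm j) hj
      simp only [hh] at this
      rw [Equiv.apply_symm_apply] at this
      rw [hB, Finset.mem_filter]
      exact ⟨Finset.mem_univ _, this⟩
    calc k = (Finset.univ.filter fun j : Fin p => ((τ.symm j : Fin p) : ℕ) < k).card := by
            rw [card_filter_comp τ.symm (fun j => (j : ℕ) < k)]; exact (card_filter_lt hkp).symm
      _ ≤ B.card := Finset.card_le_card hsub
  have hBsub : B ⊆ supp := by
    intro j hj
    simp only [hB, hsupp, Finset.mem_filter, Finset.mem_univ, true_and] at hj ⊢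
    intro h0
    rw [h0] at hj
    simp at hj
    exact hvpos.ne hj
  have hsuppk : supp.card ≤ k := hx.1
  have hBeq : B = supp := Finset.eq_of_subset_of_card_le hBsub (hsuppk.trans hBk)
  have hsuppcard : supp.card = k := le_antisymm hsuppk (hBeq ▸ hBk)
  have habs_supp : ∀ j ∈ supp, |x j| = v := by
    intro j hj
    rw [← hBeq] at hj
    simpa [hB] using (Finset.mem_filter.mp hj).2
  -- norm gives k v² = 1, v = 1/√k
  have hsum1 : ∑ j, |x j| ^ 2 = 1 := by
    have := hnx
    rw [EuclideanSpace.norm_eq] at this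
    have h2 : ∑ j, ‖x j‖ ^ 2 = 1 := by
      have hnn : 0 ≤ ∑ j, ‖x j‖ ^ 2 := Finset.sum_nonneg fun j _ => sq_nonneg _
      nlinarith [Real.sq_sqrt hnn]
    simpa [Real.norm_eq_abs] using h2
  have hkv : (k : ℝ) * v ^ 2 = 1 := by
    rw [← hsum1]
    rw [← Finset.sum_subset (Finset.subset_univ supp) (fun j _ hj => by
      have : x j = 0 := by
        by_contra hne
        exact hj (Finset.mem_filter.mpr ⟨Finset.mem_univ _, hne⟩)
      simp [this])]
    rw [Finset.sum_congr rfl (fun j hj => by rw [habs_supp j hj]), Finset.sum_const, hsuppcard,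
      nsmul_eq_mul]
  have hvval : v = (Real.sqrt k)⁻¹ := by
    have hk0 : (0:ℝ) < k := by exact_mod_cast hk1
    have hv2 : v ^ 2 = (k : ℝ)⁻¹ := by field_simp at hkv ⊢; linarith
    rw [← Real.sqrt_inv, ← hv2, Real.sqrt_sq hvpos.le]
  -- bound the inner product
  obtain ⟨σ, hσ, hσanti⟩ := exists_sort_perm θ
  have step1 : ∑ i, θ i * x i ≤ ∑ j ∈ supp, |θ j| * v := by
    rw [← Finset.sum_subset (Finset.subset_univ supp) (fun j _ hj => by
      have : x j = 0 := by
        by_contra hne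
        exact hj (Finset.mem_filter.mpr ⟨Finset.mem_univ _, hne⟩)
      simp [this])]
    refine Finset.sum_le_sum fun j hj => ?_
    calc θ j * x j ≤ |θ j * x j| := le_abs_self _
      _ = |θ j| * |x j| := abs_mul _ _
      _ = |θ j| * v := by rw [habs_supp j hj]
  have step2 : ∑ j ∈ supp, |θ j| ≤ ∑ i : Fin k, |θ (σ (Fin.castLE hkp i))| := by
    have hcard' : (supp.image σ.symm).card = k := by
      rw [Finset.card_image_of_injective _ σ.symm.injective, hsuppcard]
    have := sum_le_topk hkp (fun j => |θ (σ j)|) hσanti (supp.image σ.symm) hcard'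
    rw [Finset.sum_image (fun a _ b _ hab => σ.symm.injective hab)] at this
    calc ∑ j ∈ supp, |θ j| = ∑ j ∈ supp, |θ (σ (σ.symm j))| := by
          refine Finset.sum_congr rfl fun j _ => by rw [Equiv.apply_symm_apply]
      _ ≤ _ := this
  calc ∑ i, θ i * x i ≤ ∑ j ∈ supp, |θ j| * v := step1
    _ = v * ∑ j ∈ supp, |θ j| := by rw [Finset.mul_sum]; exact Finset.sum_congr rfl fun _ _ => mul_comm _ _
    _ ≤ v * ∑ i : Fin k, |θ (σ (Fin.castLE hkp i))| :=
        mul_le_mul_of_nonneg_left step2 hvnonneg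
    _ = (Real.sqrt k)⁻¹ * ∑ i ∈ Finset.range k, (sortedAbs θ).getD i 0 := by
        rw [hvval, sum_getD_eq hkp θ σ hσ]

lemma prefix_signed_mem {p k : ℕ} (hk1 : 1 ≤ k) (hkp : k ≤ p) (σ₀ : Equiv.Perm (Fin p)) :
    ∀ (m : ℕ) (ε : Fin p → ℝ), (∀ i, |ε i| = 1) →
    (WithLp.toLp 2 (fun i => if ((σ₀.symm i : Fin p) : ℕ) < k - m then (Real.sqrt k)⁻¹ * ε i else 0) : E p)
      ∈ convexHull ℝ (Skd p k 1 ∩ {x : E p | ‖x‖ = 1}) := by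
  intro m
  induction m with
  | zero =>
    intro ε hε
    have := subset_convexHull ℝ _ (bvec_mem hk1 hkp σ₀ ε hε)
    simpa [bvec] using this
  | succ m ih =>
    intro ε hε
    set c := (Real.sqrt k)⁻¹ with hc
    set ε' : Fin p → ℝ := fun i => if ((σ₀.symm i : Fin p) : ℕ) = k - m - 1 then -ε i else ε i
      with hε'def
    have hε' : ∀ i, |ε' i| = 1 := by
      intro i
      rw [hε'def]
      dsimp only
      split
      · rw [abs_neg]; exact hε i
      · exact hε i
    have h1 := ih ε hε
    have h2 := ih ε' hε'
    have hconv := convex_convexHull ℝ (Skd p k 1 ∩ {x : E p | ‖x‖ = 1})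
    have hmid := hconv h1 h2 (by norm_num : (0:ℝ) ≤ 1/2) (by norm_num : (0:ℝ) ≤ 1/2)
      (by norm_num)
    have heq : (WithLp.toLp 2 (fun i => if ((σ₀.symm i : Fin p) : ℕ) < k - (m + 1) then c * ε i else 0) : E p) =
        (1/2 : ℝ) • (WithLp.toLp 2 (fun i => if ((σ₀.symm i : Fin p) : ℕ) < k - m then c * ε i else 0) : E p) +
        (1/2 : ℝ) • (WithLp.toLp 2 (fun i => if ((σ₀.symm i : Fin p) : ℕ) < k - m then c * ε' i else 0) : E p) := by
      ext i
      show (if ((σ₀.symm i : Fin p) : ℕ) < k - (m + 1) then c * ε i else 0) =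
        (1/2 : ℝ) * (if ((σ₀.symm i : Fin p) : ℕ) < k - m then c * ε i else 0) +
        (1/2 : ℝ) * (if ((σ₀.symm i : Fin p) : ℕ) < k - m then c * ε' i else 0)
      simp only [hε'def]
      set t := ((σ₀.symm i : Fin p) : ℕ) with ht
      by_cases h1' : t < k - (m + 1)
      · rw [if_pos h1', if_pos (by omega), if_pos (by omega), if_neg (by omega)]
        ring
      · rw [if_neg h1']
        by_cases h2' : t < k - m
        · rw [if_pos h2', if_pos h2', if_pos (by omega)]
          ring
        · rw [if_neg h2', if_neg h2']
          ring
    rw [heq]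
    exact hmid

lemma single_signed_mem {p k : ℕ} (hk1 : 1 ≤ k) (hkp : k ≤ p) (i : Fin p) (s : ℝ)
    (hs : |s| = 1) :
    (WithLp.toLp 2 (fun j => if j = i then (Real.sqrt k)⁻¹ * s else 0) : E p)
      ∈ convexHull ℝ (Skd p k 1 ∩ {x : E p | ‖x‖ = 1}) := by
  have hp : 0 < p := lt_of_lt_of_le hk1 hkp
  have := prefix_signed_mem hk1 hkp (Equiv.swap ⟨0, hp⟩ i) (k - 1) (fun _ => s) (fun _ => hs)
  have heq : (WithLp.toLp 2 (fun j => if (((Equiv.swap ⟨0, hp⟩ i).symm j : Fin p) : ℕ) < k - (k - 1)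
        then (Real.sqrt k)⁻¹ * s else 0) : E p) =
      (WithLp.toLp 2 (fun j => if j = i then (Real.sqrt k)⁻¹ * s else 0) : E p) := by
    ext j
    simp only [PiLp.toLp_apply]
    have hkk : k - (k - 1) = 1 := by omega
    rw [hkk]
    congr 1
    simp only [Nat.lt_one_iff, eq_iff_iff, Equiv.symm_swap]
    constructor
    · intro h0
      have h1 : Equiv.swap ⟨0, hp⟩ i j = ⟨0, hp⟩ := Fin.ext (by simpa using h0)
      calc j = Equiv.swap ⟨0, hp⟩ i (Equiv.swap ⟨0, hp⟩ i j) := (Equiv.swap_apply_self _ _ _).symm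
        _ = Equiv.swap ⟨0, hp⟩ i ⟨0, hp⟩ := by rw [h1]
        _ = i := Equiv.swap_apply_left _ _
    · rintro rfl
      rw [Equiv.swap_apply_right]
  rw [heq] at this
  exact this

lemma zero_mem_hull {p k : ℕ} (hk1 : 1 ≤ k) (hkp : k ≤ p) :
    (0 : E p) ∈ convexHull ℝ (Skd p k 1 ∩ {x : E p | ‖x‖ = 1}) := by
  have := prefix_signed_mem hk1 hkp (Equiv.refl _) k (fun _ => 1) (fun _ => by norm_num)
  have heq : (WithLp.toLp 2 (fun i => if (((Equiv.refl (Fin p)).symm i : Fin p) : ℕ) < k - k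
      then (Real.sqrt k)⁻¹ * 1 else 0) : E p) = (0 : E p) := by
    ext i
    simp [Nat.sub_self]
  rw [heq] at this
  exact this

lemma abs_coord_le_norm {p : ℕ} (y : E p) (i : Fin p) : |y i| ≤ ‖y‖ := by
  rw [EuclideanSpace.norm_eq]
  calc |y i| = Real.sqrt (‖y i‖ ^ 2) := by
        rw [Real.sqrt_sq (norm_nonneg _), Real.norm_eq_abs]
    _ ≤ Real.sqrt (∑ j, ‖y j‖ ^ 2) :=
        Real.sqrt_le_sqrt (Finset.single_le_sum (fun j _ => sq_nonneg ‖y j‖) (Finset.mem_univ i))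

lemma hull_mem_nhds {p k : ℕ} (hk1 : 1 ≤ k) (hkp : k ≤ p) :
    convexHull ℝ (Skd p k 1 ∩ {x : E p | ‖x‖ = 1}) ∈ nhds (0 : E p) := by
  classical
  set c := (Real.sqrt k)⁻¹ with hc
  have hcpos : 0 < c := sqrtk_pos hk1
  have hp : 0 < p := lt_of_lt_of_le hk1 hkp
  set C := convexHull ℝ (Skd p k 1 ∩ {x : E p | ‖x‖ = 1}) with hC
  have hconv : Convex ℝ C := convex_convexHull ℝ _
  have key : ∀ y : E p, ∑ i, |y i| ≤ c → y ∈ C := by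
    intro y hy
    set T := ∑ i, |y i| with hT
    have hT0 : 0 ≤ T := Finset.sum_nonneg fun i _ => abs_nonneg _
    rcases hT0.lt_or_eq with hTpos | hTzero
    · -- T > 0
      set sgn : Fin p → ℝ := fun i => if y i < 0 then -1 else 1 with hsgn
      have hsgn1 : ∀ i, |sgn i| = 1 := by
        intro i; rw [hsgn]; dsimp only; split <;> norm_num
      have hysgn : ∀ i, |y i| * sgn i = y i := by
        intro i; rw [hsgn]; dsimp only; split
        · rw [abs_of_neg (by assumption)]; ring
        · rw [abs_of_nonneg (by linarith [not_lt.mp (by assumption)])]; ring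
      set z : Fin p → E p := fun i => WithLp.toLp 2 (fun j => if j = i then c * sgn i else 0) with hz
      have hzmem : ∀ i, z i ∈ C := fun i => single_signed_mem hk1 hkp i (sgn i) (hsgn1 i)
      have humem : (∑ i, (|y i| / T) • z i) ∈ C := by
        apply hconv.sum_mem (fun i _ => by positivity)
        · rw [← Finset.sum_div, ← hT, div_self hTpos.ne']
        · exact fun i _ => hzmem i
      have hueq : (∑ i, (|y i| / T) • z i) = (c / T) • y := by
        ext j
        have happ : (∑ i, (|y i| / T) • z i) j = ∑ i, (|y i| / T) * z i j := by
          have h0 : (∑ i, (|y i| / T) • z i) j = ∑ i, ((|y i| / T) • z i) j :=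
            by rw [WithLp.ofLp_sum]; exact Finset.sum_apply j Finset.univ _
          rw [h0]
          exact Finset.sum_congr rfl fun i _ => rfl
        rw [happ]
        have : ∀ i, (|y i| / T) * z i j = if j = i then (c / T) * y i else 0 := by
          intro i
          rw [hz]
          dsimp only
          split
          · calc |y i| / T * (c * sgn i) = c / T * (|y i| * sgn i) := by ring
              _ = c / T * y i := by rw [hysgn i]
          · ring
        rw [Finset.sum_congr rfl fun i _ => this i, Finset.sum_ite_eq Finset.univ j
          (fun i => (c / T) * y i), if_pos (Finset.mem_univ j)]
        rfl
      have hy' : y = (T / c) • (∑ i, (|y i| / T) • z i) + (1 - T / c) • (0 : E p) := by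
        rw [hueq, smul_smul, smul_zero, add_zero]
        have h1 : T / c * (c / T) = 1 := by
          field_simp
        rw [h1, one_smul]
      rw [hy']
      exact hconv humem (zero_mem_hull hk1 hkp) (by positivity)
        (by rw [sub_nonneg, div_le_one hcpos]; exact hy) (by ring)
    · -- T = 0
      have hy0 : y = 0 := by
        ext i
        have h1 : ∀ j ∈ Finset.univ, (0:ℝ) ≤ |y j| := fun j _ => abs_nonneg _
        have := (Finset.sum_eq_zero_iff_of_nonneg h1).mp hTzero.symm i (Finset.mem_univ i)
        simpa using this
      rw [hy0]
      exact zero_mem_hull hk1 hkp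
  have hball : Metric.ball (0 : E p) (c / p) ⊆ C := by
    intro y hy
    apply key
    have hnorm : ‖y‖ < c / p := by simpa using hy
    calc ∑ i, |y i| ≤ ∑ _i : Fin p, ‖y‖ := Finset.sum_le_sum fun i _ => abs_coord_le_norm y i
      _ = p * ‖y‖ := by rw [Finset.sum_const, Finset.card_univ, Fintype.card_fin, nsmul_eq_mul]
      _ ≤ p * (c / p) := by
          apply mul_le_mul_of_nonneg_left (le_of_lt hnorm) (by positivity)
      _ = c := by field_simp
  exact Filter.mem_of_superset (Metric.ball_mem_nhds 0 (by positivity)) hball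

lemma filter_lt_eq_map {p m : ℕ} (hm : m ≤ p) :
    Finset.univ.filter (fun j : Fin p => (j : ℕ) < m) =
      Finset.map (Fin.castLEEmb hm) Finset.univ := by
  ext j
  simp only [Finset.mem_filter, Finset.mem_univ, true_and, Finset.mem_map]
  constructor
  · intro hj; exact ⟨⟨j, hj⟩, rfl⟩
  · rintro ⟨i, rfl⟩; exact i.isLt

/-- the dual norm of `‖·‖_{k□1}` is
`‖θ‖_{k□1}⋆ = (1/√k)·Σ_{i=1}^k θ̄ᵢ`, the scaled sum of the `k` largest absolute
values of the entries of `θ`. -/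
theorem dual_kdNorm_k_one (p k : ℕ) (hk1 : 1 ≤ k) (hkp : k ≤ p) (θ : E p) :
    sSup {r : ℝ | ∃ β : E p, kdNorm p k 1 β ≤ 1 ∧ r = (inner ℝ θ β : ℝ)} =
      (Real.sqrt k)⁻¹ * ∑ i ∈ Finset.range k, (sortedAbs θ).getD i 0 := by
  classical
  set c := (Real.sqrt k)⁻¹ with hc
  set C := convexHull ℝ (Skd p k 1 ∩ {x : E p | ‖x‖ = 1}) with hC
  set M := c * ∑ i ∈ Finset.range k, (sortedAbs θ).getD i 0 with hM
  have hinner : ∀ β : E p, (inner ℝ θ β : ℝ) = ∑ i, θ i * β i := by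
    intro β
    rw [PiLp.inner_apply]
    exact Finset.sum_congr rfl fun i _ => by
      rw [RCLike.inner_apply, conj_trivial, mul_comm]
  have hlin : IsLinearMap ℝ (fun y : E p => (inner ℝ θ y : ℝ)) :=
    ⟨fun a b => inner_add_right θ a b, fun r a => real_inner_smul_right θ a r⟩
  have hhalf : C ⊆ {y : E p | (inner ℝ θ y : ℝ) ≤ M} := by
    apply convexHull_min
    · intro x hx
      show (inner ℝ θ x : ℝ) ≤ M
      rw [hinner x]
      exact inner_le_topk hk1 hkp θ hx.1 hx.2
    · exact convex_halfSpace_le hlin M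
  have hclosed : IsClosed {y : E p | (inner ℝ θ y : ℝ) ≤ M} :=
    isClosed_le (Continuous.inner continuous_const continuous_id) continuous_const
  have hub : ∀ r ∈ {r : ℝ | ∃ β : E p, kdNorm p k 1 β ≤ 1 ∧ r = (inner ℝ θ β : ℝ)}, r ≤ M := by
    rintro r ⟨β, hβ, rfl⟩
    have hβ' : gauge C β ≤ 1 := hβ
    have hmemcl : β ∈ closure C :=
      (gauge_le_one_iff_mem_closure (convex_convexHull ℝ _) (hull_mem_nhds hk1 hkp)).mp hβ'
    exact (closure_minimal hhalf hclosed) hmemcl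
  obtain ⟨σ, hσ, hσanti⟩ := exists_sort_perm θ
  set ε : Fin p → ℝ := fun i => if θ i < 0 then -1 else 1 with hε'
  have hε : ∀ i, |ε i| = 1 := by
    intro i; rw [hε']; dsimp only; split <;> norm_num
  have hθε : ∀ i, θ i * ε i = |θ i| := by
    intro i; rw [hε']; dsimp only; split
    · rw [abs_of_neg (by assumption)]; ring
    · rw [abs_of_nonneg (not_lt.mp (by assumption))]; ring
  set β₀ := bvec p k σ ε with hβ₀
  have hmem : β₀ ∈ Skd p k 1 ∩ {x : E p | ‖x‖ = 1} := bvec_mem hk1 hkp σ ε hε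
  have hg : kdNorm p k 1 β₀ ≤ 1 := gauge_le_one_of_mem (subset_convexHull ℝ _ hmem)
  have hval : (inner ℝ θ β₀ : ℝ) = M := by
    rw [hinner]
    rw [← Equiv.sum_comp σ (fun i => θ i * β₀ i)]
    have hterm : ∀ j : Fin p, θ (σ j) * β₀ (σ j) =
        if (j : ℕ) < k then c * |θ (σ j)| else 0 := by
      intro j
      show θ (σ j) * (if ((σ.symm (σ j) : Fin p) : ℕ) < k then c * ε (σ j) else 0) = _
      rw [Equiv.symm_apply_apply]
      split
      · calc θ (σ j) * (c * ε (σ j)) = c * (θ (σ j) * ε (σ j)) := by ring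
          _ = c * |θ (σ j)| := by rw [hθε]
      · ring
    rw [Finset.sum_congr rfl fun j _ => hterm j]
    rw [← Finset.sum_filter, filter_lt_eq_map hkp, Finset.sum_map]
    rw [← Finset.mul_sum, hM, sum_getD_eq hkp θ σ hσ]
    rfl
  exact IsGreatest.csSup_eq ⟨⟨β₀, hg, hval.symm⟩, hub⟩


end
end

section
/- Let 1 ≤ k ≤ p and let B_{k□1} be the convex hull of S_{k,1} ∩ 𝕊^{p−1}. Then the set of extreme points of B_{k□1} equals S_{k,1} ∩ 𝕊^{p−1}, which is exactly the set of vectors in ℝ^p having exactly k nonzero entries, each of absolute value 1/√k. -/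
open Metric Set

noncomputable section

/-- In a descending-sorted list of nonnegative reals, the `i`-th entry is nonzero
iff `i` is less than the number of nonzero entries. -/
lemma sorted_get_ne_zero_iff (l : List ℝ) (hs : l.Pairwise (· ≥ ·))
    (hnn : ∀ a ∈ l, 0 ≤ a) :
    ∀ (i : ℕ) (h : i < l.length),
      (l.get ⟨i, h⟩ ≠ 0 ↔ i < l.countP (fun a => decide (a ≠ 0))) := by
  induction l with
  | nil => intro i h; simp at h
  | cons a t ih =>
    have hs' : t.Pairwise (· ≥ ·) := hs.of_cons
    have hat : ∀ b ∈ t, b ≤ a := fun b hb => List.rel_of_pairwise_cons hs hb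
    have hnn' : ∀ b ∈ t, 0 ≤ b := fun b hb => hnn b (List.mem_cons_of_mem _ hb)
    intro i h
    rw [List.countP_cons]
    by_cases ha : a = 0
    · have ht0 : ∀ b ∈ t, b = 0 := fun b hb => le_antisymm (ha ▸ hat b hb) (hnn' b hb)
      have hct : t.countP (fun a => decide (a ≠ 0)) = 0 :=
        List.countP_eq_zero.2 (fun b hb => by simp [ht0 b hb])
      have hget : (a :: t).get ⟨i, h⟩ = 0 := by
        have hmem : (a :: t).get ⟨i, h⟩ ∈ a :: t := List.get_mem _ _
        rcases List.mem_cons.1 hmem with h1 | h1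
        · rw [h1, ha]
        · exact ht0 _ h1
      rw [hct, hget]
      simp [ha]
    · match i with
      | 0 =>
        simp [ha]
      | Nat.succ i =>
        have h' : i < t.length := Nat.succ_lt_succ_iff.mp (by simpa using h)
        rw [List.get_cons_succ]
        rw [ih hs' hnn' i h']
        simp [ha, Nat.succ_lt_succ_iff]

lemma countP_sortedAbs {p : ℕ} (x : E p) :
    (sortedAbs x).countP (fun a => decide (a ≠ 0)) =
      (Finset.univ.filter fun i => x i ≠ 0).card := by
  rw [sortedAbs, (List.perm_insertionSort _ _).countP_eq]
  rw [List.ofFn_eq_map, List.countP_map, Finset.card, Finset.filter_val,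
    ← Multiset.countP_eq_card_filter, Fin.univ_def]
  show List.countP ((fun a => decide (a ≠ 0)) ∘ fun i => |x i|) (List.finRange p)
      = Multiset.countP (fun i => x i ≠ 0) (↑(List.finRange p))
  rw [Multiset.coe_countP]
  refine List.countP_congr fun i _ => ?_
  simp [Function.comp, abs_ne_zero]

/-- The combinatorial description of `S_{k,1} ∩ 𝕊^{p-1}`. -/
lemma skd_sphere_eq (p k : ℕ) (hk1 : 1 ≤ k) (hkp : k ≤ p) :
    Skd p k 1 ∩ {x : E p | ‖x‖ = 1} =
      {x : E p | (Finset.univ.filter fun i => x i ≠ 0).card = k ∧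
        ∀ i : Fin p, x i ≠ 0 → |x i| = (Real.sqrt k)⁻¹} := by
  have hk0 : (0 : ℝ) < (k : ℝ) := by exact_mod_cast hk1
  ext x
  have hlen : (sortedAbs x).length = p := by
    rw [sortedAbs, List.length_insertionSort, List.length_ofFn]
  have hs : (sortedAbs x).Pairwise (· ≥ ·) := List.pairwise_insertionSort _ _
  have hmemiff : ∀ a, a ∈ sortedAbs x ↔ ∃ i, |x i| = a := by
    intro a
    rw [sortedAbs, (List.perm_insertionSort _ _).mem_iff, List.mem_ofFn]
  have hnn : ∀ a ∈ sortedAbs x, 0 ≤ a := by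
    intro a ha
    obtain ⟨i, rfl⟩ := (hmemiff a).1 ha
    exact abs_nonneg _
  have hcount := countP_sortedAbs x
  have hnormsq : ‖x‖ = Real.sqrt (∑ i, |x i| ^ 2) := by
    rw [EuclideanSpace.norm_eq]
    simp [Real.norm_eq_abs]
  have hsumfilter : ∑ i, |x i| ^ 2
      = ∑ i ∈ Finset.univ.filter (fun i => x i ≠ 0), |x i| ^ 2 := by
    symm
    apply Finset.sum_filter_of_ne
    intro i _ hfne h0
    apply hfne
    rw [h0]
    simp
  constructor
  · rintro ⟨⟨hmk, himg⟩, hx1⟩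
    simp only [Set.mem_setOf_eq] at hx1
    have hx0 : x ≠ 0 := by
      intro h
      rw [h] at hx1
      simp at hx1
    have hm1 : 0 < (Finset.univ.filter fun i => x i ≠ 0).card := by
      obtain ⟨i, hi⟩ : ∃ i, x i ≠ 0 := by
        by_contra hcon
        push_neg at hcon
        exact hx0 (by ext i; exact hcon i)
      exact Finset.card_pos.2 ⟨i, by simp [hi]⟩
    have h0p : 0 < (sortedAbs x).length := by omega
    set c := (sortedAbs x).get ⟨0, h0p⟩ with hc
    have hgetD : ∀ (i : ℕ) (h : i < (sortedAbs x).length),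
        (sortedAbs x).getD i 0 = (sortedAbs x).get ⟨i, h⟩ := by
      intro i h
      rw [List.getD_eq_getElem _ _ h]
      rfl
    have hCeq : ∀ i ∈ Finset.range k, (sortedAbs x).getD i 0 = (sortedAbs x).getD 0 0 := by
      intro i hi
      refine Finset.card_le_one.1 himg _ ?_ _ ?_
      · exact Finset.mem_image_of_mem _ hi
      · exact Finset.mem_image_of_mem _ (Finset.mem_range.2 (by omega))
    have hc0 : (sortedAbs x).getD 0 0 = c := hgetD 0 h0p
    have hcne : c ≠ 0 :=
      (sorted_get_ne_zero_iff _ hs hnn 0 h0p).2 (by rw [hcount]; exact hm1)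
    have hmeq : (Finset.univ.filter fun i => x i ≠ 0).card = k := by
      by_contra hne
      have hlt : (Finset.univ.filter fun i => x i ≠ 0).card < k := lt_of_le_of_ne hmk hne
      set m := (Finset.univ.filter fun i => x i ≠ 0).card with hmdef
      have hmp : m < (sortedAbs x).length := by omega
      have hz : (sortedAbs x).get ⟨m, hmp⟩ = 0 := by
        by_contra hcon
        have := (sorted_get_ne_zero_iff _ hs hnn m hmp).1 hcon
        rw [hcount] at this
        omega
      have := (hCeq m (Finset.mem_range.2 hlt)).symm.trans (hgetD m hmp) |>.trans hz
      rw [hc0] at this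
      exact hcne this
    have hall : ∀ i : Fin p, x i ≠ 0 → |x i| = c := by
      intro i hi
      have hmem : |x i| ∈ sortedAbs x := (hmemiff _).2 ⟨i, rfl⟩
      obtain ⟨n, hn⟩ := List.mem_iff_get.1 hmem
      have hna : (sortedAbs x).get n ≠ 0 := by rw [hn]; simpa using hi
      have hnk : (n : ℕ) < k := by
        have := (sorted_get_ne_zero_iff _ hs hnn n n.isLt).1 hna
        rw [hcount, hmeq] at this
        exact this
      have := (hCeq n (Finset.mem_range.2 hnk)).trans hc0
      rw [hgetD n n.isLt] at this
      rw [← hn]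
      exact this
    -- compute c
    have hsum1 : ∑ i, |x i| ^ 2 = 1 := by
      have : Real.sqrt (∑ i, |x i| ^ 2) = 1 := hnormsq ▸ hx1
      have hnn2 : 0 ≤ ∑ i, |x i| ^ 2 := Finset.sum_nonneg fun i _ => sq_nonneg _
      nlinarith [Real.sq_sqrt hnn2]
    have hkc : (k : ℝ) * c ^ 2 = 1 := by
      rw [← hsum1, hsumfilter]
      rw [Finset.sum_congr rfl fun i hi => by
        rw [hall i (Finset.mem_filter.1 hi).2]]
      rw [Finset.sum_const, hmeq, nsmul_eq_mul]
    have hcpos : 0 < c := lt_of_le_of_ne (hnn c (List.get_mem _ _)) (Ne.symm hcne)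
    have hcval : c = (Real.sqrt k)⁻¹ := by
      have hcsq : c ^ 2 = (k : ℝ)⁻¹ := by
        have hk0' : (k : ℝ) ≠ 0 := ne_of_gt hk0
        field_simp
        nlinarith [hkc]
      rw [← Real.sqrt_inv, ← hcsq, Real.sqrt_sq hcpos.le]
    exact ⟨hmeq, fun i hi => (hall i hi).trans hcval⟩
  · rintro ⟨hcard, habs⟩
    have hsqk : ((Real.sqrt k)⁻¹) ^ 2 = (k : ℝ)⁻¹ := by
      rw [inv_pow, Real.sq_sqrt hk0.le]
    have hsum1 : ∑ i, |x i| ^ 2 = 1 := by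
      rw [hsumfilter]
      rw [Finset.sum_congr rfl fun i hi => by
        rw [habs i (Finset.mem_filter.1 hi).2]]
      rw [Finset.sum_const, hcard, nsmul_eq_mul, hsqk]
      field_simp
    have hx1 : ‖x‖ = 1 := by
      rw [hnormsq, hsum1, Real.sqrt_one]
    refine ⟨⟨le_of_eq hcard, ?_⟩, hx1⟩
    have hgetval : ∀ i ∈ Finset.range k, (sortedAbs x).getD i 0 = (Real.sqrt k)⁻¹ := by
      intro i hi
      have hik : i < k := Finset.mem_range.1 hi
      have hip : i < (sortedAbs x).length := by omega
      have hgd : (sortedAbs x).getD i 0 = (sortedAbs x).get ⟨i, hip⟩ := by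
        rw [List.getD_eq_getElem _ _ hip]; rfl
      have hne : (sortedAbs x).get ⟨i, hip⟩ ≠ 0 :=
        (sorted_get_ne_zero_iff _ hs hnn i hip).2 (by rw [hcount, hcard]; exact hik)
      obtain ⟨j, hj⟩ := (hmemiff _).1 (List.get_mem (sortedAbs x) ⟨i, hip⟩)
      have hjne : x j ≠ 0 := by
        intro h0
        rw [h0] at hj
        simp at hj
        exact hne hj.symm
      rw [hgd, ← hj, habs j hjne]
    refine Finset.card_le_one.2 fun a ha b hb => ?_
    obtain ⟨i, hi, rfl⟩ := Finset.mem_image.1 ha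
    obtain ⟨j, hj, rfl⟩ := Finset.mem_image.1 hb
    rw [hgetval i hi, hgetval j hj]

/-- the extreme points of `B_{k□1} = conv(S_{k,1} ∩ 𝕊^{p−1})` are exactly
`S_{k,1} ∩ 𝕊^{p−1}`, which is the set of vectors with exactly `k` nonzero entries,
each of absolute value `1/√k`. -/
theorem extremePoints_kdBall_k_one (p k : ℕ) (hk1 : 1 ≤ k) (hkp : k ≤ p) :
    Set.extremePoints ℝ (convexHull ℝ (Skd p k 1 ∩ {x : E p | ‖x‖ = 1})) =
        Skd p k 1 ∩ {x : E p | ‖x‖ = 1} ∧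
      Skd p k 1 ∩ {x : E p | ‖x‖ = 1} =
        {x : E p | (Finset.univ.filter fun i => x i ≠ 0).card = k ∧
          ∀ i : Fin p, x i ≠ 0 → |x i| = (Real.sqrt k)⁻¹} := by
  constructor
  · refine Subset.antisymm extremePoints_convexHull_subset ?_
    intro x hx
    have hx1 : ‖x‖ = 1 := hx.2
    have hsub : convexHull ℝ (Skd p k 1 ∩ {x : E p | ‖x‖ = 1}) ⊆ closedBall 0 1 :=
      convexHull_min (fun y hy => mem_closedBall_zero_iff.2 (le_of_eq hy.2))
        (convex_closedBall _ _)
    rw [mem_extremePoints]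
    refine ⟨subset_convexHull _ _ hx, ?_⟩
    rintro x₁ hx₁ x₂ hx₂ hseg
    by_cases hne : x₁ = x₂
    · subst hne
      rw [openSegment_same] at hseg
      exact ⟨hseg.symm, hseg.symm⟩
    · obtain ⟨a, b, ha, hb, hab, hxe⟩ := hseg
      have hlt : ‖a • x₁ + b • x₂‖ < 1 :=
        norm_combo_lt_of_ne (mem_closedBall_zero_iff.1 (hsub hx₁))
          (mem_closedBall_zero_iff.1 (hsub hx₂)) hne ha hb hab
      rw [hxe, hx1] at hlt
      exact absurd hlt (lt_irrefl 1)
  · exact skd_sphere_eq p k hk1 hkp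

end
end
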